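/- arXiv:2310.10117 — 12 statements merged into one kernel-verified Lean document; each statement's English description precedes it below -/
import Mathlib

section
/- Let r > 0, c > 0 and q ∈ (0,1), and let (a_t)_{t≥0} be a sequence of nonnegative real numbers satisfying (1 + r)·a_{t+1} ≤ a_t + c·q^{2t} for all t ≥ 0. Then for every t ≥ 0, a_{t+1} ≤ (max{q, 1/(1+r)})^{t+1} · (a_0 + c/(1 − q)). -/
/-- Lemma B.1 (auxiliary recurrence): if `(1+r) a_{t+1} ≤ a_t + c q^{2t}` for all `t`,
with `r, c > 0` and `q ∈ (0,1)`, then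
`a_{t+1} ≤ (max {q, 1/(1+r)})^{t+1} (a_0 + c/(1-q))`. -/
theorem stmt_0 (r c q : ℝ) (hr : 0 < r) (hc : 0 < c) (hq0 : 0 < q) (hq1 : q < 1)
    (a : ℕ → ℝ) (ha : ∀ t, 0 ≤ a t)
    (hrec : ∀ t : ℕ, (1 + r) * a (t + 1) ≤ a t + c * q ^ (2 * t)) :
    ∀ t : ℕ, a (t + 1) ≤ (max q (1 / (1 + r))) ^ (t + 1) * (a 0 + c / (1 - q)) := by
  set ρ : ℝ := max q (1 / (1 + r)) with hρ
  have hr1 : (0:ℝ) < 1 + r := by linarith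
  have hρpos : 0 < ρ := lt_of_lt_of_le hq0 (le_max_left _ _)
  have hqρ : q ≤ ρ := le_max_left _ _
  have hinvρ : 1 / (1 + r) ≤ ρ := le_max_right _ _
  have hstep : ∀ t : ℕ, a (t + 1) ≤ ρ * (a t + c * q ^ (2 * t)) := by
    intro t
    have hat := ha t
    have hnn : 0 ≤ a t + c * q ^ (2 * t) := by positivity
    have h1 : a (t + 1) ≤ (1 / (1 + r)) * (a t + c * q ^ (2 * t)) := by
      rw [div_mul_eq_mul_div, le_div_iff₀ hr1, mul_comm]
      simpa using hrec t
    exact h1.trans (mul_le_mul_of_nonneg_right hinvρ hnn)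
  -- main claim with partial geometric sums
  have key : ∀ t : ℕ, a t ≤ ρ ^ t * (a 0 + c * ∑ i ∈ Finset.range t, q ^ i) := by
    intro t
    induction t with
    | zero => simp
    | succ t ih =>
      have h1 : a (t + 1) ≤ ρ * (ρ ^ t * (a 0 + c * ∑ i ∈ Finset.range t, q ^ i)
          + c * q ^ (2 * t)) := by
        refine (hstep t).trans (mul_le_mul_of_nonneg_left (by linarith) hρpos.le)
      have h2 : c * q ^ (2 * t) ≤ ρ ^ t * (c * q ^ t) := by
        have : q ^ (2 * t) = q ^ t * q ^ t := by ring
        rw [this]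
        have h := pow_le_pow_left₀ hq0.le hqρ t
        nlinarith [mul_le_mul_of_nonneg_left h (mul_nonneg hc.le (pow_pos hq0 t).le)]
      have h3 : a (t + 1) ≤ ρ * (ρ ^ t * (a 0 + c * ∑ i ∈ Finset.range t, q ^ i)
          + ρ ^ t * (c * q ^ t)) :=
        h1.trans (mul_le_mul_of_nonneg_left (by linarith) hρpos.le)
      calc a (t + 1) ≤ _ := h3
        _ = ρ ^ (t + 1) * (a 0 + c * ∑ i ∈ Finset.range (t + 1), q ^ i) := by
            rw [Finset.sum_range_succ]; ring
  intro t
  have hsum : (∑ i ∈ Finset.range (t + 1), q ^ i) ≤ 1 / (1 - q) := by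
    have h1q : 0 < 1 - q := by linarith
    have heq : (q ^ (t + 1) - 1) / (q - 1) = (1 - q ^ (t + 1)) / (1 - q) := by
      rw [div_eq_div_iff (by linarith : q - 1 ≠ 0) h1q.ne']; ring
    rw [geom_sum_eq hq1.ne, heq, div_le_div_iff₀ h1q h1q]
    nlinarith [pow_pos hq0 (t + 1)]
  have := key (t + 1)
  refine this.trans (mul_le_mul_of_nonneg_left ?_ (pow_pos hρpos (t + 1)).le)
  have : c * ∑ i ∈ Finset.range (t + 1), q ^ i ≤ c * (1 / (1 - q)) :=
    mul_le_mul_of_nonneg_left hsum hc.le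
  rw [mul_one_div] at this
  linarith
end

section
/- Let H be a real inner product space, J : H → H firmly nonexpansive with fixed point z*, and let β > 0, s̄ > 0, n ≥ 1 a natural number. Let (z^k)_{k≥0} be a sequence in H with ‖z^{k+1} − J(z^k)‖ ≤ β·√n·s̄/(k+1)² for all k ≥ 0. Then for every k ≥ 0, each of ‖z^k − z*‖, ‖J(z^k) − z*‖ and ‖z^k − J(z^k)‖ is at most ‖z^0 − z*‖ + 2√n·s̄·β. -/
lemma sum_inv_sq_le (k : ℕ) :
    ∑ j ∈ Finset.range k, (1:ℝ)/((j:ℝ)+1)^2 ≤ 2 - 2/((k:ℝ)+1) := by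
  induction k with
  | zero => norm_num
  | succ k ih =>
    rw [Finset.sum_range_succ]
    have hk : (0:ℝ) < (k:ℝ)+1 := by positivity
    have hk2 : (0:ℝ) < (k:ℝ)+2 := by positivity
    have : (1:ℝ)/((k:ℝ)+1)^2 ≤ 2/((k:ℝ)+1) - 2/((k:ℝ)+2) := by
      rw [div_sub_div _ _ (ne_of_gt hk) (ne_of_gt hk2), div_le_div_iff₀ (by positivity) (by positivity)]
      ring_nf
      nlinarith
    push_cast
    have h22 : ((k:ℝ)+1+1) = (k:ℝ)+2 := by ring
    rw [h22]
    linarith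

/-- Lemma 3.1 (bounded iterates), abstract form: for a firmly nonexpansive `J` with fixed
point `z*` and iterates with `‖z^{k+1} − J z^k‖ ≤ β √n s̄/(k+1)²`, each of
`‖z^k − z*‖`, `‖J z^k − z*‖`, `‖z^k − J z^k‖` is at most `‖z^0 − z*‖ + 2√n s̄ β`. -/
theorem stmt_2 {H : Type*} [NormedAddCommGroup H] [InnerProductSpace ℝ H]
    (J : H → H)
    (hJ : ∀ x y : H, ‖J x - J y‖ ^ 2 + ‖(x - J x) - (y - J y)‖ ^ 2 ≤ ‖x - y‖ ^ 2)
    (zstar : H) (hfix : J zstar = zstar)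
    (β sbar : ℝ) (hβ : 0 < β) (hsbar : 0 < sbar) (n : ℕ) (hn : 1 ≤ n)
    (z : ℕ → H)
    (hz : ∀ k : ℕ, ‖z (k + 1) - J (z k)‖ ≤ β * Real.sqrt n * sbar / ((k : ℝ) + 1) ^ 2) :
    ∀ k : ℕ,
      ‖z k - zstar‖ ≤ ‖z 0 - zstar‖ + 2 * Real.sqrt n * sbar * β ∧
      ‖J (z k) - zstar‖ ≤ ‖z 0 - zstar‖ + 2 * Real.sqrt n * sbar * β ∧
      ‖z k - J (z k)‖ ≤ ‖z 0 - zstar‖ + 2 * Real.sqrt n * sbar * β := by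
  have hc : (0:ℝ) < β * Real.sqrt n * sbar := by
    have : (0:ℝ) < Real.sqrt n := Real.sqrt_pos.mpr (by exact_mod_cast hn)
    positivity
  set c := β * Real.sqrt n * sbar with hcdef
  -- nonexpansiveness at zstar
  have hne : ∀ x : H, ‖J x - zstar‖ ≤ ‖x - zstar‖ := by
    intro x
    have h := hJ x zstar
    rw [hfix] at h
    simp only [sub_self, sub_zero] at h
    nlinarith [norm_nonneg (J x - zstar), norm_nonneg (x - zstar), sq_nonneg ‖x - J x‖]
  have hxJ : ∀ x : H, ‖x - J x‖ ≤ ‖x - zstar‖ := by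
    intro x
    have h := hJ x zstar
    rw [hfix] at h
    simp only [sub_self, sub_zero] at h
    nlinarith [norm_nonneg (x - J x), norm_nonneg (x - zstar), sq_nonneg ‖J x - zstar‖]
  -- main induction
  have key : ∀ k : ℕ, ‖z k - zstar‖ ≤
      ‖z 0 - zstar‖ + c * ∑ j ∈ Finset.range k, (1:ℝ)/((j:ℝ)+1)^2 := by
    intro k
    induction k with
    | zero => simp
    | succ k ih =>
      have h1 : ‖z (k+1) - zstar‖ ≤ ‖z (k+1) - J (z k)‖ + ‖J (z k) - zstar‖ :=
        norm_sub_le_norm_sub_add_norm_sub _ _ _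
      have h2 := hz k
      have h3 := hne (z k)
      rw [Finset.sum_range_succ]
      have : c / ((k:ℝ)+1)^2 = c * ((1:ℝ)/((k:ℝ)+1)^2) := by ring
      calc ‖z (k+1) - zstar‖ ≤ c / ((k:ℝ)+1)^2 + ‖z k - zstar‖ := by linarith
        _ ≤ ‖z 0 - zstar‖ + c * (∑ j ∈ Finset.range k, (1:ℝ)/((j:ℝ)+1)^2 + 1/((k:ℝ)+1)^2) := by
            rw [this]; linarith [ih]
  have keyb : ∀ k : ℕ, ‖z k - zstar‖ ≤ ‖z 0 - zstar‖ + 2 * Real.sqrt n * sbar * β := by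
    intro k
    have hs := sum_inv_sq_le k
    have hk : (0:ℝ) < 2/((k:ℝ)+1) := by positivity
    have : c * ∑ j ∈ Finset.range k, (1:ℝ)/((j:ℝ)+1)^2 ≤ c * 2 := by
      apply mul_le_mul_of_nonneg_left _ hc.le
      linarith
    have := key k
    nlinarith [hc]
  intro k
  refine ⟨keyb k, ?_, ?_⟩
  · exact le_trans (hne (z k)) (keyb k)
  · exact le_trans (hxJ (z k)) (keyb k)
end

section
/- Let H be a real inner product space, J : H → H firmly nonexpansive with a fixed point z*, (e_k)_{k≥0} nonnegative reals, and (z^k)_{k≥0} a sequence in H with ‖z^{k+1} − J(z^k)‖ ≤ e_k for all k ≥ 0. Then for every integer K ≥ 1, min over k with K ≤ k ≤ 2K of ‖z^{k+1} − z^k‖ is at most √2 · (‖z^0 − z*‖ + 2 Σ_{k=0}^{2K} e_k) / √(K+1). -/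
set_option maxHeartbeats 800000

/-- Lemma A.3 (inexact PPA rate): for a firmly nonexpansive `J` with fixed point `z*`
and iterates `‖z^{k+1} − J z^k‖ ≤ e_k`, for every `K ≥ 1` the minimum of
`‖z^{k+1} − z^k‖` over `K ≤ k ≤ 2K` is at most
`√2 (‖z^0 − z*‖ + 2 Σ_{k=0}^{2K} e_k)/√(K+1)`. -/
theorem stmt_3 {H : Type*} [NormedAddCommGroup H] [InnerProductSpace ℝ H]
    (J : H → H)
    (hJ : ∀ x y : H, ‖J x - J y‖ ^ 2 + ‖(x - J x) - (y - J y)‖ ^ 2 ≤ ‖x - y‖ ^ 2)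
    (zstar : H) (hfix : J zstar = zstar)
    (e : ℕ → ℝ) (he : ∀ k, 0 ≤ e k)
    (z : ℕ → H) (hz : ∀ k : ℕ, ‖z (k + 1) - J (z k)‖ ≤ e k) :
    ∀ K : ℕ, 1 ≤ K →
      ∃ k : ℕ, K ≤ k ∧ k ≤ 2 * K ∧
        ‖z (k + 1) - z k‖ ≤
          Real.sqrt 2 * (‖z 0 - zstar‖ + 2 * ∑ j ∈ Finset.range (2 * K + 1), e j) /
            Real.sqrt ((K : ℝ) + 1) := by
  intro K hK
  set a : ℕ → ℝ := fun k => ‖z k - zstar‖ with ha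
  set d : ℕ → ℝ := fun k => ‖z (k + 1) - z k‖ with hd
  set E : ℝ := ∑ j ∈ Finset.range (2 * K + 1), e j with hEdef
  have hE0 : 0 ≤ E := Finset.sum_nonneg fun i _ => he i
  have ha0 : 0 ≤ a 0 := norm_nonneg _
  -- basic facts at each k
  have h1 : ∀ k, ‖J (z k) - zstar‖ ^ 2 + ‖z k - J (z k)‖ ^ 2 ≤ a k ^ 2 := by
    intro k
    have := hJ (z k) zstar
    simpa [hfix, sub_self, sub_zero] using this
  have hcle : ∀ k, ‖J (z k) - zstar‖ ≤ a k := by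
    intro k
    have h := h1 k
    nlinarith [norm_nonneg (J (z k) - zstar), norm_nonneg (z k - J (z k)),
      norm_nonneg (z k - zstar), sq_nonneg (‖z k - J (z k)‖)]
  have hstep : ∀ k, a (k + 1) ≤ a k + e k := by
    intro k
    have htri : a (k + 1) ≤ ‖z (k + 1) - J (z k)‖ + ‖J (z k) - zstar‖ := by
      simpa using norm_sub_le_norm_sub_add_norm_sub (z (k+1)) (J (z k)) zstar
    have := hcle k
    have := hz k
    linarith
  have haA : ∀ k, k ≤ 2 * K + 1 → a k ≤ a 0 + E := by
    intro k hk
    have hbd : a k ≤ a 0 + ∑ j ∈ Finset.range k, e j := by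
      induction k with
      | zero => simp
      | succ n ih =>
        have hn : n ≤ 2 * K + 1 := by omega
        have := hstep n
        rw [Finset.sum_range_succ]
        have := ih (by omega)
        linarith
    have hsum : ∑ j ∈ Finset.range k, e j ≤ E := by
      apply Finset.sum_le_sum_of_subset_of_nonneg
      · exact Finset.range_subset_range.mpr hk
      · exact fun i _ _ => he i
    linarith
  -- key per-step inequality
  have key : ∀ k, d k ^ 2 ≤ a k ^ 2 - a (k + 1) ^ 2 + 4 * e k * a k + 2 * e k ^ 2 := by
    intro k
    set c := ‖J (z k) - zstar‖ with hc
    set b := ‖z k - J (z k)‖ with hb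
    have h1k := h1 k
    have hck := hcle k
    have hbk : b ≤ a k := by nlinarith [norm_nonneg (J (z k) - zstar)]
    have h2 : a (k + 1) ≤ e k + c := by
      have htri : a (k + 1) ≤ ‖z (k + 1) - J (z k)‖ + c := by
        simpa using norm_sub_le_norm_sub_add_norm_sub (z (k+1)) (J (z k)) zstar
      linarith [hz k]
    have h3 : d k ≤ e k + b := by
      have htri : d k ≤ ‖z (k + 1) - J (z k)‖ + ‖J (z k) - z k‖ := by
        simpa using norm_sub_le_norm_sub_add_norm_sub (z (k+1)) (J (z k)) (z k)
      have : ‖J (z k) - z k‖ = b := norm_sub_rev _ _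
      linarith [hz k]
    have hd0 : 0 ≤ d k := norm_nonneg _
    have ha1 : 0 ≤ a (k + 1) := norm_nonneg _
    have hb0 : 0 ≤ b := norm_nonneg _
    have hc0 : 0 ≤ c := norm_nonneg _
    have hd2 : d k ^ 2 ≤ (e k + b) ^ 2 := by nlinarith
    have ha2 : a (k + 1) ^ 2 ≤ (e k + c) ^ 2 := by nlinarith
    nlinarith [mul_nonneg (he k) (sub_nonneg.mpr hbk), mul_nonneg (he k) (sub_nonneg.mpr hck)]
  -- bound each term on [K, 2K]
  set A : ℝ := a 0 + E with hA
  have hterm : ∀ k ∈ Finset.Icc K (2 * K),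
      d k ^ 2 ≤ (a k ^ 2 - a (k + 1) ^ 2) + (4 * A + 2 * E) * e k := by
    intro k hk
    rw [Finset.mem_Icc] at hk
    have hak : a k ≤ A := haA k (by omega)
    have hek : e k ≤ E := by
      apply Finset.single_le_sum (fun i _ => he i)
      exact Finset.mem_range.mpr (by omega)
    have := key k
    nlinarith [he k, mul_nonneg (he k) (sub_nonneg.mpr hak)]
  -- telescoping sum bound
  have htel : ∑ k ∈ Finset.Icc K (2 * K), (a k ^ 2 - a (k + 1) ^ 2)
      = a K ^ 2 - a (2 * K + 1) ^ 2 := by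
    have h : Finset.Icc K (2 * K) = Finset.Ico K (2 * K + 1) := by
      rw [Finset.Ico_add_one_right_eq_Icc]
    rw [h]
    rw [Finset.sum_Ico_eq_sub _ (by omega)]
    rw [Finset.sum_range_sub' (fun k => a k ^ 2), Finset.sum_range_sub' (fun k => a k ^ 2)]
    ring
  have hsumE : ∑ k ∈ Finset.Icc K (2 * K), e k ≤ E := by
    apply Finset.sum_le_sum_of_subset_of_nonneg
    · intro x hx
      rw [Finset.mem_Icc] at hx
      exact Finset.mem_range.mpr (by omega)
    · exact fun i _ _ => he i
  have hC0 : 0 ≤ 4 * A + 2 * E := by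
    have : 0 ≤ A := by positivity
    linarith
  have hS : ∑ k ∈ Finset.Icc K (2 * K), d k ^ 2 ≤ A ^ 2 + (4 * A + 2 * E) * E := by
    calc ∑ k ∈ Finset.Icc K (2 * K), d k ^ 2
        ≤ ∑ k ∈ Finset.Icc K (2 * K), ((a k ^ 2 - a (k + 1) ^ 2) + (4 * A + 2 * E) * e k) :=
          Finset.sum_le_sum hterm
      _ = (a K ^ 2 - a (2 * K + 1) ^ 2) + (4 * A + 2 * E) * ∑ k ∈ Finset.Icc K (2 * K), e k := by
          rw [Finset.sum_add_distrib, htel, ← Finset.mul_sum]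
      _ ≤ A ^ 2 + (4 * A + 2 * E) * E := by
          have hK2 : a K ≤ A := haA K (by omega)
          have h2 : a K ^ 2 ≤ A ^ 2 := by nlinarith [norm_nonneg (z K - zstar)]
          have h3 : (4 * A + 2 * E) * ∑ k ∈ Finset.Icc K (2 * K), e k ≤ (4 * A + 2 * E) * E :=
            mul_le_mul_of_nonneg_left hsumE hC0
          nlinarith [sq_nonneg (a (2 * K + 1))]
  -- pick the minimizer
  have hne : (Finset.Icc K (2 * K)).Nonempty := ⟨K, Finset.mem_Icc.mpr ⟨le_refl _, by omega⟩⟩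
  obtain ⟨k₀, hk₀mem, hk₀min⟩ := Finset.exists_min_image (Finset.Icc K (2 * K)) d hne
  rw [Finset.mem_Icc] at hk₀mem
  refine ⟨k₀, hk₀mem.1, hk₀mem.2, ?_⟩
  have hcard : (Finset.Icc K (2 * K)).card = K + 1 := by
    rw [Nat.card_Icc]; omega
  have hbound : ∀ x ∈ Finset.Icc K (2 * K), d k₀ ^ 2 ≤ d x ^ 2 := fun x hx =>
    pow_le_pow_left₀ (norm_nonneg _) (hk₀min x hx) 2
  have hmin : ((K : ℝ) + 1) * d k₀ ^ 2 ≤ ∑ k ∈ Finset.Icc K (2 * K), d k ^ 2 := by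
    have h := Finset.card_nsmul_le_sum (Finset.Icc K (2 * K)) (fun k => d k ^ 2) (d k₀ ^ 2) hbound
    rw [hcard, nsmul_eq_mul] at h
    push_cast at h
    linarith
  have hfinal2 : (K + 1 : ℝ) * d k₀ ^ 2 ≤ 2 * (a 0 + 2 * E) ^ 2 := by
    have : A ^ 2 + (4 * A + 2 * E) * E ≤ 2 * (a 0 + 2 * E) ^ 2 := by nlinarith
    linarith [hS]
  have hK1 : (0:ℝ) < (K : ℝ) + 1 := by positivity
  have hd2 : d k₀ ^ 2 ≤ 2 * (a 0 + 2 * E) ^ 2 / ((K : ℝ) + 1) := by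
    rw [le_div_iff₀ hK1]
    linarith [hfinal2]
  have hX0 : 0 ≤ a 0 + 2 * E := by linarith
  have hR : (Real.sqrt 2 * (a 0 + 2 * E) / Real.sqrt ((K : ℝ) + 1)) ^ 2
      = 2 * (a 0 + 2 * E) ^ 2 / ((K : ℝ) + 1) := by
    rw [div_pow, mul_pow, Real.sq_sqrt (by norm_num : (0:ℝ) ≤ 2),
      Real.sq_sqrt (le_of_lt hK1)]
  have hR0 : 0 ≤ Real.sqrt 2 * (a 0 + 2 * E) / Real.sqrt ((K : ℝ) + 1) := by positivity
  have : d k₀ ≤ Real.sqrt 2 * (a 0 + 2 * E) / Real.sqrt ((K : ℝ) + 1) := by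
    have h := Real.sqrt_le_sqrt (hd2.trans_eq hR.symm)
    rwa [Real.sqrt_sq (norm_nonneg _), Real.sqrt_sq hR0] at h
  exact this
end

section
/- Let H be a real inner product space, J : H → H firmly nonexpansive with fixed point z*, β > 0, s̄ > 0, n ≥ 1 a natural number, and set τ_k = s̄/(k+1)² and r_0 = ‖z^0 − z*‖. Let (z^k)_{k≥0} be a sequence in H with ‖z^{k+1} − J(z^k)‖ ≤ β√n·τ_k for all k ≥ 0. Then for every integer K ≥ 1: (i) min over K ≤ k ≤ 2K of (τ_k + ‖z^{k+1} − z^k‖/β) ≤ (s̄ + √2(r_0 + 4√n·s̄·β)/β)/√(K+1); and (ii) for any ε_1, ε_2 ∈ (0,1), if K + 1 ≥ (s̄ + √2(r_0 + 4√n·s̄·β)/β)² · max{ε_1^{−2}, ε_2^{−2}}, then there exists k with K ≤ k ≤ 2K such that τ_k + ‖z^{k+1} − z^k‖/β ≤ ε_1 and ‖z^{k+1} − z^k‖/β ≤ ε_2. -/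
private lemma le_of_sq_le_sq' {x y : ℝ} (hx : 0 ≤ x) (hy : 0 ≤ y) (h : x ^ 2 ≤ y ^ 2) :
    x ≤ y := by nlinarith

set_option maxHeartbeats 2000000 in
/-- Quantitative core of Theorem 3.2(a) (outer iteration complexity), abstract form:
with `τ_k = s̄/(k+1)²`, `r₀ = ‖z⁰ − z*‖`, and `‖z^{k+1} − J z^k‖ ≤ β√n τ_k`,
(i) for every `K ≥ 1` there is `K ≤ k ≤ 2K` with
`τ_k + ‖z^{k+1} − z^k‖/β ≤ (s̄ + √2(r₀ + 4√n s̄ β)/β)/√(K+1)`; and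
(ii) if moreover `K + 1 ≥ (s̄ + √2(r₀ + 4√n s̄ β)/β)² max{ε₁⁻², ε₂⁻²}` for
`ε₁, ε₂ ∈ (0,1)`, then some `K ≤ k ≤ 2K` satisfies
`τ_k + ‖z^{k+1} − z^k‖/β ≤ ε₁` and `‖z^{k+1} − z^k‖/β ≤ ε₂`. -/
theorem stmt_4 {H : Type*} [NormedAddCommGroup H] [InnerProductSpace ℝ H]
    (J : H → H)
    (hJ : ∀ x y : H, ‖J x - J y‖ ^ 2 + ‖(x - J x) - (y - J y)‖ ^ 2 ≤ ‖x - y‖ ^ 2)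
    (zstar : H) (hfix : J zstar = zstar)
    (β sbar : ℝ) (hβ : 0 < β) (hsbar : 0 < sbar) (n : ℕ) (hn : 1 ≤ n)
    (τ : ℕ → ℝ) (hτ : ∀ k : ℕ, τ k = sbar / ((k : ℝ) + 1) ^ 2)
    (z : ℕ → H)
    (r0 : ℝ) (hr0 : r0 = ‖z 0 - zstar‖)
    (hz : ∀ k : ℕ, ‖z (k + 1) - J (z k)‖ ≤ β * Real.sqrt n * τ k) :
    (∀ K : ℕ, 1 ≤ K →
      ∃ k : ℕ, K ≤ k ∧ k ≤ 2 * K ∧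
        τ k + ‖z (k + 1) - z k‖ / β ≤
          (sbar + Real.sqrt 2 * (r0 + 4 * Real.sqrt n * sbar * β) / β) /
            Real.sqrt ((K : ℝ) + 1)) ∧
    (∀ K : ℕ, 1 ≤ K → ∀ ε1 ε2 : ℝ, 0 < ε1 → ε1 < 1 → 0 < ε2 → ε2 < 1 →
      (sbar + Real.sqrt 2 * (r0 + 4 * Real.sqrt n * sbar * β) / β) ^ 2 *
          max (1 / ε1 ^ 2) (1 / ε2 ^ 2) ≤ (K : ℝ) + 1 →
      ∃ k : ℕ, K ≤ k ∧ k ≤ 2 * K ∧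
        τ k + ‖z (k + 1) - z k‖ / β ≤ ε1 ∧ ‖z (k + 1) - z k‖ / β ≤ ε2) := by
  have hsqn1 : (1:ℝ) ≤ Real.sqrt n := by
    rw [show (1:ℝ) = Real.sqrt 1 by simp]
    exact Real.sqrt_le_sqrt (by exact_mod_cast hn)
  have hsqn0 : (0:ℝ) < Real.sqrt n := lt_of_lt_of_le one_pos hsqn1
  have hsq2 : Real.sqrt 2 ^ 2 = 2 := Real.sq_sqrt (by norm_num)
  have hsq2_1 : (1:ℝ) ≤ Real.sqrt 2 := by nlinarith [Real.sqrt_nonneg 2]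
  have hsq2_2 : Real.sqrt 2 ≤ 3/2 := by nlinarith [Real.sqrt_nonneg 2]
  have hr0nn : 0 ≤ r0 := by rw [hr0]; exact norm_nonneg _
  set b : ℝ := β * Real.sqrt n * sbar with hbdef
  have hbpos : 0 < b := by positivity
  set R : ℝ := r0 + 2 * b with hRdef
  have hRnn : 0 ≤ R := by rw [hRdef]; linarith
  have hτpos : ∀ k : ℕ, 0 < τ k := fun k => by rw [hτ k]; positivity
  have hτles : ∀ k : ℕ, τ k ≤ sbar := by
    intro k
    rw [hτ k, div_le_iff₀ (by positivity)]
    have hk0 : (0:ℝ) ≤ (k:ℝ) := Nat.cast_nonneg k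
    nlinarith [mul_nonneg hsbar.le hk0, mul_nonneg (mul_nonneg hsbar.le hk0) hk0]
  have hδleb : ∀ k : ℕ, β * Real.sqrt n * τ k ≤ b := by
    intro k
    rw [hbdef]
    have := hτles k
    nlinarith
  have hnon : ∀ x y : H, ‖J x - J y‖ ≤ ‖x - y‖ := by
    intro x y
    have h := hJ x y
    refine le_of_sq_le_sq' (norm_nonneg _) (norm_nonneg _) ?_
    nlinarith [sq_nonneg ‖(x - J x) - (y - J y)‖]
  have hastep : ∀ k : ℕ, ‖z (k+1) - zstar‖ ≤ ‖z k - zstar‖ + β * Real.sqrt n * τ k := by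
    intro k
    have hsplit : z (k+1) - zstar = (z (k+1) - J (z k)) + (J (z k) - J zstar) := by
      rw [hfix]; abel
    calc ‖z (k+1) - zstar‖ = ‖(z (k+1) - J (z k)) + (J (z k) - J zstar)‖ := by rw [hsplit]
      _ ≤ ‖z (k+1) - J (z k)‖ + ‖J (z k) - J zstar‖ := norm_add_le _ _
      _ ≤ β * Real.sqrt n * τ k + ‖z k - zstar‖ := add_le_add (hz k) (hnon _ _)
      _ = ‖z k - zstar‖ + β * Real.sqrt n * τ k := by ring
  have hτtel : ∀ k : ℕ, τ k ≤ 2 * sbar * (1/((k:ℝ)+1) - 1/((k:ℝ)+2)) := by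
    intro k
    have h1 : (0:ℝ) < (k:ℝ)+1 := by positivity
    have h2 : (0:ℝ) < (k:ℝ)+2 := by positivity
    rw [hτ k]
    rw [show 2 * sbar * (1/((k:ℝ)+1) - 1/((k:ℝ)+2)) = 2*sbar / (((k:ℝ)+1)*((k:ℝ)+2)) by
      field_simp; ring]
    rw [div_le_div_iff₀ (by positivity) (by positivity)]
    have hk0 : (0:ℝ) ≤ (k:ℝ) := Nat.cast_nonneg k
    nlinarith [mul_nonneg hsbar.le hk0, mul_nonneg (mul_nonneg hsbar.le hk0) hk0]
  have hδtel : ∀ k : ℕ, β * Real.sqrt n * τ k ≤ 2*b*(1/((k:ℝ)+1) - 1/((k:ℝ)+2)) := by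
    intro k
    have h4 : β * Real.sqrt n * τ k
        ≤ β * Real.sqrt n * (2 * sbar * (1/((k:ℝ)+1) - 1/((k:ℝ)+2))) :=
      mul_le_mul_of_nonneg_left (hτtel k) (by positivity)
    calc β * Real.sqrt n * τ k
        ≤ β * Real.sqrt n * (2 * sbar * (1/((k:ℝ)+1) - 1/((k:ℝ)+2))) := h4
      _ = 2*b*(1/((k:ℝ)+1) - 1/((k:ℝ)+2)) := by rw [hbdef]; ring
  have haR' : ∀ k : ℕ, ‖z k - zstar‖ ≤ r0 + 2*b*(1 - 1/((k:ℝ)+1)) := by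
    intro k
    induction k with
    | zero => simp [hr0]
    | succ k ih =>
      have h1 := hastep k
      have h2 := hδtel k
      push_cast
      push_cast at ih h1 h2
      ring_nf
      ring_nf at ih h1 h2
      linarith
  have haR : ∀ k : ℕ, ‖z k - zstar‖ ≤ R := by
    intro k
    refine le_trans (haR' k) ?_
    have h1 : (0:ℝ) ≤ 1/((k:ℝ)+1) := by positivity
    rw [hRdef]; nlinarith
  have hkey : ∀ k : ℕ, ‖z k - J (z k)‖^2 + ‖z (k+1) - zstar‖^2
      ≤ ‖z k - zstar‖^2 + 3*R*(β * Real.sqrt n * τ k) := by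
    intro k
    have h1 := hJ (z k) zstar
    rw [hfix, sub_self, sub_zero] at h1
    have h2 : ‖z (k+1) - zstar‖ ≤ ‖J (z k) - zstar‖ + β * Real.sqrt n * τ k := by
      have hsplit : z (k+1) - zstar = (z (k+1) - J (z k)) + (J (z k) - zstar) := by abel
      calc ‖z (k+1) - zstar‖ = ‖(z (k+1) - J (z k)) + (J (z k) - zstar)‖ := by rw [hsplit]
        _ ≤ ‖z (k+1) - J (z k)‖ + ‖J (z k) - zstar‖ := norm_add_le _ _
        _ ≤ β * Real.sqrt n * τ k + ‖J (z k) - zstar‖ := by linarith [hz k]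
        _ = ‖J (z k) - zstar‖ + β * Real.sqrt n * τ k := by ring
    have h3 : ‖J (z k) - zstar‖ ≤ R := by
      calc ‖J (z k) - zstar‖ = ‖J (z k) - J zstar‖ := by rw [hfix]
        _ ≤ ‖z k - zstar‖ := hnon _ _
        _ ≤ R := haR k
    have h4 : β * Real.sqrt n * τ k ≤ R := le_trans (hδleb k) (by rw [hRdef]; linarith)
    have h5 : 0 ≤ β * Real.sqrt n * τ k := le_of_lt (mul_pos (mul_pos hβ hsqn0) (hτpos k))
    have h6 : ‖z (k+1) - zstar‖^2 ≤ (‖J (z k) - zstar‖ + β * Real.sqrt n * τ k)^2 := by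
      nlinarith [norm_nonneg (z (k+1) - zstar), norm_nonneg (J (z k) - zstar)]
    nlinarith [norm_nonneg (J (z k) - zstar)]
  -- main existence statement (part i)
  have main : ∀ K : ℕ, 1 ≤ K →
      ∃ k : ℕ, K ≤ k ∧ k ≤ 2 * K ∧
        τ k + ‖z (k + 1) - z k‖ / β ≤
          (sbar + Real.sqrt 2 * (r0 + 4 * Real.sqrt n * sbar * β) / β) /
            Real.sqrt ((K : ℝ) + 1) := by
    intro K hK
    have hK1 : (2:ℝ) ≤ (K:ℝ) + 1 := by
      have : (1:ℝ) ≤ (K:ℝ) := by exact_mod_cast hK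
      linarith
    have hsum : ∀ m : ℕ, ∑ j ∈ Finset.range m, ‖z (K+j) - J (z (K+j))‖^2
        ≤ ‖z K - zstar‖^2 - ‖z (K+m) - zstar‖^2
          + 3*R*∑ j ∈ Finset.range m, (β * Real.sqrt n * τ (K+j)) := by
      intro m
      induction m with
      | zero => simp
      | succ m ih =>
        rw [Finset.sum_range_succ, Finset.sum_range_succ]
        have hk := hkey (K+m)
        have he : K + (m+1) = (K+m)+1 := by omega
        rw [he]
        linarith
    have hsumτ : ∀ m : ℕ, ∑ j ∈ Finset.range m, (β * Real.sqrt n * τ (K+j))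
        ≤ 2*b*(1/((K:ℝ)+1) - 1/((K:ℝ)+(m:ℝ)+1)) := by
      intro m
      induction m with
      | zero => simp
      | succ m ih =>
        rw [Finset.sum_range_succ]
        have h2 := hδtel (K+m)
        push_cast
        push_cast at ih h2
        rw [show (K:ℝ) + ((m:ℝ) + 1) + 1 = (K:ℝ) + (m:ℝ) + 2 by ring]
        linarith
    -- total sum bound
    have hsumτ' : ∑ j ∈ Finset.range (K+1), (β * Real.sqrt n * τ (K+j)) ≤ b := by
      refine le_trans (hsumτ (K+1)) ?_
      have h1 : (0:ℝ) < (K:ℝ)+1 := by linarith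
      have h2 : (0:ℝ) < (K:ℝ)+((K:ℝ)+1)+1 := by linarith
      have h3 : 1/((K:ℝ)+1) ≤ 1/2 := by
        rw [div_le_div_iff₀ h1 (by norm_num)]; linarith
      have h4 : (0:ℝ) ≤ 1/((K:ℝ)+((K+1:ℕ):ℝ)+1) := by positivity
      push_cast at h4 ⊢
      nlinarith
    have hsumd : ∑ j ∈ Finset.range (K+1), ‖z (K+j) - J (z (K+j))‖^2 ≤ R^2 + 3*R*b := by
      refine le_trans (hsum (K+1)) ?_
      have h1 : ‖z K - zstar‖^2 ≤ R^2 := by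
        have := haR K
        nlinarith [norm_nonneg (z K - zstar)]
      have h2 : (0:ℝ) ≤ ‖z (K+(K+1)) - zstar‖^2 := sq_nonneg _
      nlinarith
    -- pick the minimizing index
    obtain ⟨j0, hj0mem, hj0min⟩ := Finset.exists_min_image (Finset.range (K+1))
      (fun j => ‖z (K+j) - J (z (K+j))‖^2) ⟨0, by simp⟩
    have hj0 : j0 ≤ K := Nat.lt_succ_iff.mp (Finset.mem_range.mp hj0mem)
    set k := K + j0 with hkdef
    have hmin : ((K:ℝ)+1) * ‖z k - J (z k)‖^2
        ≤ ∑ j ∈ Finset.range (K+1), ‖z (K+j) - J (z (K+j))‖^2 := by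
      have h := Finset.card_nsmul_le_sum (Finset.range (K+1))
        (fun j => ‖z (K+j) - J (z (K+j))‖^2) (‖z k - J (z k)‖^2)
        (fun j hj => hj0min j hj)
      simpa [nsmul_eq_mul, Finset.card_range] using h
    have hd2 : ‖z k - J (z k)‖^2 ≤ (R^2 + 3*R*b) / ((K:ℝ)+1) := by
      rw [le_div_iff₀ (by linarith)]
      calc ‖z k - J (z k)‖^2 * ((K:ℝ)+1) = ((K:ℝ)+1) * ‖z k - J (z k)‖^2 := by ring
        _ ≤ _ := le_trans hmin hsumd
    -- pass to square roots
    set s : ℝ := Real.sqrt ((K:ℝ)+1) with hsdef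
    have hs2 : s^2 = (K:ℝ)+1 := Real.sq_sqrt (by linarith)
    have hs1 : (1:ℝ) ≤ s := by nlinarith [Real.sqrt_nonneg ((K:ℝ)+1)]
    have hspos : (0:ℝ) < s := by linarith
    set M : ℝ := Real.sqrt 2 * R + (2*Real.sqrt 2 - 1) * b with hMdef
    have hMnn : 0 ≤ M := by
      rw [hMdef]; nlinarith [Real.sqrt_nonneg 2]
    have hds : ‖z k - J (z k)‖ * s ≤ M := by
      refine le_of_sq_le_sq' (by positivity) hMnn ?_
      have hexp : (‖z k - J (z k)‖ * s)^2 = ‖z k - J (z k)‖^2 * s^2 := by ring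
      rw [hexp, hs2]
      have h1 : ‖z k - J (z k)‖^2 * ((K:ℝ)+1) ≤ R^2 + 3*R*b := by
        rw [← le_div_iff₀ (by linarith)]; exact hd2
      refine le_trans h1 ?_
      rw [hMdef]
      nlinarith [hsq2, hsq2_1, hsq2_2, hRnn, hbpos.le, mul_nonneg hRnn hbpos.le,
        sq_nonneg b, sq_nonneg R]
    -- bounds on τ k and δ k at index k
    have hkK : ((K:ℝ)+1) ≤ ((k:ℝ)+1) := by
      have : (K:ℝ) ≤ (k:ℝ) := by exact_mod_cast Nat.le_add_right K j0
      linarith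
    have hsk : s ≤ ((k:ℝ)+1)^2 := by nlinarith
    have hτks : τ k * s ≤ sbar := by
      rw [hτ k]
      rw [div_mul_eq_mul_div, div_le_iff₀ (by positivity)]
      nlinarith [hspos]
    -- final assembly
    refine ⟨k, Nat.le_add_right K j0, by omega, ?_⟩
    have htri : ‖z (k+1) - z k‖ ≤ β * Real.sqrt n * τ k + ‖z k - J (z k)‖ := by
      have hsplit : z (k+1) - z k = (z (k+1) - J (z k)) + (J (z k) - z k) := by abel
      calc ‖z (k+1) - z k‖ = ‖(z (k+1) - J (z k)) + (J (z k) - z k)‖ := by rw [hsplit]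
        _ ≤ ‖z (k+1) - J (z k)‖ + ‖J (z k) - z k‖ := norm_add_le _ _
        _ = ‖z (k+1) - J (z k)‖ + ‖z k - J (z k)‖ := by rw [norm_sub_rev (J (z k))]
        _ ≤ β * Real.sqrt n * τ k + ‖z k - J (z k)‖ := by linarith [hz k]
    have hC : sbar + Real.sqrt 2 * (r0 + 4 * Real.sqrt n * sbar * β) / β
        = sbar + (Real.sqrt n * sbar + (Real.sqrt 2 * R + (2*Real.sqrt 2 - 1) * b) / β) := by
      rw [hRdef, hbdef]
      field_simp
      ring
    rw [hC]
    rw [le_div_iff₀ hspos]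
    have h2 : ‖z (k+1) - z k‖ / β ≤ Real.sqrt n * τ k + ‖z k - J (z k)‖ / β := by
      rw [div_le_iff₀ hβ]
      calc ‖z (k+1) - z k‖ ≤ β * Real.sqrt n * τ k + ‖z k - J (z k)‖ := htri
        _ = (Real.sqrt n * τ k + ‖z k - J (z k)‖ / β) * β := by field_simp
    have h1 : ‖z (k+1) - z k‖ / β * s ≤ (Real.sqrt n * τ k + ‖z k - J (z k)‖ / β) * s :=
      mul_le_mul_of_nonneg_right h2 (le_of_lt hspos)
    have h3 : Real.sqrt n * τ k * s ≤ Real.sqrt n * sbar := by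
      calc Real.sqrt n * τ k * s = Real.sqrt n * (τ k * s) := by ring
        _ ≤ Real.sqrt n * sbar := mul_le_mul_of_nonneg_left hτks (le_of_lt hsqn0)
    have h4 : ‖z k - J (z k)‖ / β * s ≤ M / β := by
      rw [div_mul_eq_mul_div, div_le_div_iff₀ hβ hβ]
      nlinarith [hds]
    have h5 : (Real.sqrt n * τ k + ‖z k - J (z k)‖ / β) * s
        = Real.sqrt n * τ k * s + ‖z k - J (z k)‖ / β * s := by ring
    rw [hMdef] at h4
    nlinarith [h1, h3, h4, hτks, h5]
  refine ⟨main, ?_⟩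
  -- part (ii)
  intro K hK ε1 ε2 hε1 hε1' hε2 hε2' hbig
  obtain ⟨k, hk1, hk2, hk3⟩ := main K hK
  set C : ℝ := sbar + Real.sqrt 2 * (r0 + 4 * Real.sqrt n * sbar * β) / β with hCdef
  have hCpos : 0 < C := by
    have h0 : 0 ≤ Real.sqrt 2 * (r0 + 4 * Real.sqrt n * sbar * β) / β :=
      div_nonneg (mul_nonneg (Real.sqrt_nonneg 2) (by nlinarith)) hβ.le
    rw [hCdef]; linarith
  have hKpos : (0:ℝ) < (K:ℝ)+1 := by positivity
  have hs2K : (Real.sqrt ((K:ℝ)+1))^2 = (K:ℝ)+1 := Real.sq_sqrt hKpos.le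
  have hsposK : 0 < Real.sqrt ((K:ℝ)+1) := Real.sqrt_pos.mpr hKpos
  have hsle : ∀ ε : ℝ, 0 < ε → C^2 * (1/ε^2) ≤ (K:ℝ)+1 → C / Real.sqrt ((K:ℝ)+1) ≤ ε := by
    intro ε hε h
    rw [div_le_iff₀ hsposK]
    refine le_of_sq_le_sq' hCpos.le (by positivity) ?_
    have he2 : (ε * Real.sqrt ((K:ℝ)+1))^2 = ε^2 * ((K:ℝ)+1) := by
      rw [mul_pow, hs2K]
    rw [he2]
    have hne : (ε:ℝ)^2 ≠ 0 := pow_ne_zero 2 (ne_of_gt hε)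
    have hC2 : C^2 ≤ ((K:ℝ)+1) * ε^2 := by
      have h' : C^2 * (1/ε^2) * ε^2 ≤ ((K:ℝ)+1) * ε^2 :=
        mul_le_mul_of_nonneg_right h (sq_nonneg ε)
      rwa [mul_assoc, one_div, inv_mul_cancel₀ hne, mul_one] at h'
    linarith [hC2]
  have hb1 : C^2 * (1/ε1^2) ≤ (K:ℝ)+1 :=
    le_trans (mul_le_mul_of_nonneg_left (le_max_left (1/ε1^2) (1/ε2^2)) (sq_nonneg C)) hbig
  have hb2 : C^2 * (1/ε2^2) ≤ (K:ℝ)+1 :=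
    le_trans (mul_le_mul_of_nonneg_left (le_max_right (1/ε1^2) (1/ε2^2)) (sq_nonneg C)) hbig
  have he1 := hsle ε1 hε1 hb1
  have he2 := hsle ε2 hε2 hb2
  exact ⟨k, hk1, hk2, le_trans hk3 he1, by linarith [hτpos k, le_trans hk3 he2]⟩
end

section
/- Let f : ℝ^d → ℝ be convex and differentiable, let c_1, …, c_m : ℝ^d → ℝ be convex and differentiable, and let h : ℝ^d → ℝ be convex. Let β, τ, ε_1, ε_2 > 0, let w, w⁺ ∈ ℝ^d, and let μ ∈ ℝ^m with μ_j ≥ 0 for all j. Define μ⁺ ∈ ℝ^m by μ⁺_j = max(μ_j + β·c_j(w⁺), 0). Assume there exists a subgradient g of h at w⁺ such that ‖∇f(w⁺) + g + Σ_{j=1}^m μ⁺_j ∇c_j(w⁺) + (w⁺ − w)/β‖_∞ ≤ τ, and assume the termination conditions ‖w⁺ − w‖_∞ + β·τ ≤ β·ε_1 and ‖μ⁺ − μ‖_∞ ≤ β·ε_2 hold. Then: (i) μ⁺_j ≥ 0 for all j and there exists a subgradient g' of h at w⁺ with ‖∇f(w⁺) + g' + Σ_{j=1}^m μ⁺_j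 ∇c_j(w⁺)‖_∞ ≤ ε_1; and (ii) there exists v ∈ ℝ^m with v_j ≤ 0 and v_j·μ⁺_j = 0 for all j, such that ‖c(w⁺) − v‖_∞ ≤ ε_2, where c(w⁺) = (c_1(w⁺), …, c_m(w⁺)). -/
open scoped RealInnerProductSpace

/-- The ℓ∞-norm of a vector in Euclidean space. -/
noncomputable def linf {d : ℕ} (v : EuclideanSpace ℝ (Fin d)) : ℝ :=
  ‖(WithLp.equiv 2 (Fin d → ℝ)) v‖

lemma linf_add_le {d : ℕ} (a b : EuclideanSpace ℝ (Fin d)) :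
    linf (a + b) ≤ linf a + linf b := norm_add_le _ _

lemma linf_smul {d : ℕ} (s : ℝ) (v : EuclideanSpace ℝ (Fin d)) :
    linf (s • v) = |s| * linf v := by
  simp [linf, norm_smul, Real.norm_eq_abs]

/-- Theorem 3.1 (output of the proximal AL based FL algorithm at termination):
if `μ⁺ = [μ + β c(w⁺)]₊`, the proximal AL subproblem is solved to accuracy `τ` in
the ℓ∞ sense, and the termination tests `‖w⁺ − w‖_∞ + βτ ≤ βε₁`,
`‖μ⁺ − μ‖_∞ ≤ βε₂` hold, then `(w⁺, μ⁺)` is an `(ε₁, ε₂)`-optimal solution. -/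
theorem stmt_5 {d m : ℕ}
    (f : EuclideanSpace ℝ (Fin d) → ℝ) (f' : EuclideanSpace ℝ (Fin d) → EuclideanSpace ℝ (Fin d))
    (hfcvx : ConvexOn ℝ Set.univ f) (hf' : ∀ x, HasGradientAt f (f' x) x)
    (c : Fin m → EuclideanSpace ℝ (Fin d) → ℝ)
    (c' : Fin m → EuclideanSpace ℝ (Fin d) → EuclideanSpace ℝ (Fin d))
    (hccvx : ∀ j, ConvexOn ℝ Set.univ (c j)) (hc' : ∀ j x, HasGradientAt (c j) (c' j x) x)
    (h : EuclideanSpace ℝ (Fin d) → ℝ) (hhcvx : ConvexOn ℝ Set.univ h)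
    (β τ ε1 ε2 : ℝ) (hβ : 0 < β) (hτ : 0 < τ) (hε1 : 0 < ε1) (hε2 : 0 < ε2)
    (w wplus : EuclideanSpace ℝ (Fin d)) (μ : Fin m → ℝ) (hμ : ∀ j, 0 ≤ μ j)
    (μplus : Fin m → ℝ) (hμplus : ∀ j, μplus j = max (μ j + β * c j wplus) 0)
    (hstat : ∃ g : EuclideanSpace ℝ (Fin d),
      (∀ y, h wplus + ⟪g, y - wplus⟫ ≤ h y) ∧
      linf (f' wplus + g + ∑ j, μplus j • c' j wplus + β⁻¹ • (wplus - w)) ≤ τ)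
    (hterm1 : linf (wplus - w) + β * τ ≤ β * ε1)
    (hterm2 : ‖μplus - μ‖ ≤ β * ε2) :
    ((∀ j, 0 ≤ μplus j) ∧
      ∃ g' : EuclideanSpace ℝ (Fin d),
        (∀ y, h wplus + ⟪g', y - wplus⟫ ≤ h y) ∧
        linf (f' wplus + g' + ∑ j, μplus j • c' j wplus) ≤ ε1) ∧
    (∃ v : Fin m → ℝ, (∀ j, v j ≤ 0 ∧ v j * μplus j = 0) ∧
      ‖(fun j => c j wplus) - v‖ ≤ ε2) := by
  obtain ⟨g, hg, hgnorm⟩ := hstat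
  constructor
  · refine ⟨fun j => by rw [hμplus j]; exact le_max_right _ _, g, hg, ?_⟩
    have key : f' wplus + g + ∑ j, μplus j • c' j wplus =
        (f' wplus + g + ∑ j, μplus j • c' j wplus + β⁻¹ • (wplus - w)) +
          (-β⁻¹) • (wplus - w) := by
      module
    rw [key]
    calc linf _ ≤ τ + |(-β⁻¹)| * linf (wplus - w) := by
          refine (linf_add_le _ _).trans ?_
          rw [linf_smul]
          exact add_le_add_left hgnorm _
      _ ≤ ε1 := by
          rw [abs_neg, abs_of_pos (inv_pos.mpr hβ)]
          have h1 : linf (wplus - w) ≤ β * ε1 - β * τ := by linarith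
          have h2 : β⁻¹ * linf (wplus - w) ≤ β⁻¹ * (β * ε1 - β * τ) :=
            mul_le_mul_of_nonneg_left h1 (inv_pos.mpr hβ).le
          rw [mul_sub, inv_mul_cancel_left₀ hβ.ne', inv_mul_cancel_left₀ hβ.ne'] at h2
          linarith
  · refine ⟨fun j => c j wplus - β⁻¹ * (μplus j - μ j), fun j => ?_, ?_⟩
    · rcases le_or_gt 0 (μ j + β * c j wplus) with hc0 | hc0
      · have hpj : μplus j = μ j + β * c j wplus := by rw [hμplus j, max_eq_left hc0]
        constructor
        · show c j wplus - β⁻¹ * (μplus j - μ j) ≤ 0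
          rw [hpj]; field_simp; ring_nf; rfl
        · show (c j wplus - β⁻¹ * (μplus j - μ j)) * μplus j = 0
          rw [hpj]; field_simp; ring
      · have hpj : μplus j = 0 := by rw [hμplus j, max_eq_right hc0.le]
        have hm := hμ j
        constructor
        · show c j wplus - β⁻¹ * (μplus j - μ j) ≤ 0
          rw [hpj]
          nlinarith [mul_pos (inv_pos.mpr hβ) (show (0:ℝ) < -(μ j + β * c j wplus) by linarith),
            inv_mul_cancel₀ hβ.ne']
        · show (c j wplus - β⁻¹ * (μplus j - μ j)) * μplus j = 0
          rw [hpj]; ring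
    · have : ((fun j => c j wplus) - fun j => c j wplus - β⁻¹ * (μplus j - μ j)) =
          β⁻¹ • (μplus - μ) := by
        funext j; simp only [Pi.sub_apply, Pi.smul_apply, smul_eq_mul]; ring
      rw [this, norm_smul, Real.norm_eq_abs, abs_of_pos (inv_pos.mpr hβ)]
      calc β⁻¹ * ‖μplus - μ‖ ≤ β⁻¹ * (β * ε2) :=
            mul_le_mul_of_nonneg_left hterm2 (inv_pos.mpr hβ).le
        _ = ε2 := by field_simp
end

section
/- Let f : ℝ^d → ℝ and c = (c_1, …, c_m) : ℝ^d → ℝ^m be differentiable, β > 0, n ≥ 1 a natural number, μ ∈ ℝ^m, w̄ ∈ ℝ^d. For w ∈ ℝ^d let A(w) : ℝ^m → ℝ^d be the linear map A(w)ν = Σ_{j=1}^m ν_j ∇c_j(w) (the adjoint of the Jacobian of c at w), and define G(w) = ∇f(w) + A(w)[μ + β c(w)]_+ + (w − w̄)/((n+1)β). Let U ⊆ ℝ^d be a convex set and L_1, L_2, U_1, U_2 ≥ 0 constants such that for all u, v ∈ U: ‖∇f(u) − ∇f(v)‖ ≤ L_1‖u − v‖, ‖A(u) − A(v)‖ ≤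 L_2‖u − v‖ (operator norm), ‖c(u)‖ ≤ U_1, and ‖A(u)‖ ≤ U_2. Then for all u, v ∈ U, ‖G(u) − G(v)‖ ≤ (L_1 + (‖μ‖ + β U_1)·L_2 + β U_2² + 1/((n+1)β))·‖u − v‖. -/
open InnerProductSpace

lemma euclid_norm_le_of_abs_le {m : ℕ} {x y : EuclideanSpace ℝ (Fin m)}
    (h : ∀ i, |x i| ≤ |y i|) : ‖x‖ ≤ ‖y‖ := by
  rw [EuclideanSpace.norm_eq, EuclideanSpace.norm_eq]
  apply Real.sqrt_le_sqrt
  apply Finset.sum_le_sum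
  intro i _
  simp only [Real.norm_eq_abs]
  exact pow_le_pow_left₀ (abs_nonneg _) (h i) 2

set_option maxHeartbeats 1000000 in
/-- Quantitative Lipschitz estimate for the gradient
`G(w) = ∇f(w) + A(w)[μ + βc(w)]₊ + (w − w̄)/((n+1)β)` of the augmented-Lagrangian
merit function on a convex set `U`, where `A(w)ν = Σ_j ν_j ∇c_j(w)`:
if on `U` the gradient `∇f` is `L₁`-Lipschitz, `A` is `L₂`-Lipschitz in operator
norm, `‖c(u)‖ ≤ U₁` and `‖A(u)‖ ≤ U₂`, then `G` is
`(L₁ + (‖μ‖ + βU₁)L₂ + βU₂² + 1/((n+1)β))`-Lipschitz on `U`. -/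
theorem stmt_7 {d m : ℕ}
    (f : EuclideanSpace ℝ (Fin d) → ℝ) (f' : EuclideanSpace ℝ (Fin d) → EuclideanSpace ℝ (Fin d))
    (hf' : ∀ x, HasGradientAt f (f' x) x)
    (c : Fin m → EuclideanSpace ℝ (Fin d) → ℝ)
    (c' : Fin m → EuclideanSpace ℝ (Fin d) → EuclideanSpace ℝ (Fin d))
    (hc' : ∀ j x, HasGradientAt (c j) (c' j x) x)
    (β : ℝ) (hβ : 0 < β) (n : ℕ) (hn : 1 ≤ n)
    (μ : EuclideanSpace ℝ (Fin m)) (wbar : EuclideanSpace ℝ (Fin d))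
    (A : EuclideanSpace ℝ (Fin d) → (EuclideanSpace ℝ (Fin m) →L[ℝ] EuclideanSpace ℝ (Fin d)))
    (hA : ∀ w ν, A w ν = ∑ j, ν j • c' j w)
    (G : EuclideanSpace ℝ (Fin d) → EuclideanSpace ℝ (Fin d))
    (hG : ∀ w, G w = f' w +
      A w ((WithLp.equiv 2 (Fin m → ℝ)).symm fun j => max (μ j + β * c j w) 0) +
      (((n : ℝ) + 1) * β)⁻¹ • (w - wbar))
    (U : Set (EuclideanSpace ℝ (Fin d))) (hU : Convex ℝ U)
    (L1 L2 U1 U2 : ℝ) (hL1 : 0 ≤ L1) (hL2 : 0 ≤ L2) (hU1 : 0 ≤ U1) (hU2 : 0 ≤ U2)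
    (hfLip : ∀ u ∈ U, ∀ v ∈ U, ‖f' u - f' v‖ ≤ L1 * ‖u - v‖)
    (hALip : ∀ u ∈ U, ∀ v ∈ U, ‖A u - A v‖ ≤ L2 * ‖u - v‖)
    (hcBd : ∀ u ∈ U, ‖(WithLp.equiv 2 (Fin m → ℝ)).symm (fun j => c j u)‖ ≤ U1)
    (hABd : ∀ u ∈ U, ‖A u‖ ≤ U2) :
    ∀ u ∈ U, ∀ v ∈ U,
      ‖G u - G v‖ ≤
        (L1 + (‖μ‖ + β * U1) * L2 + β * U2 ^ 2 + 1 / (((n : ℝ) + 1) * β)) * ‖u - v‖ := by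
  intro u hu v hv
  set k : ℝ := (((n : ℝ) + 1) * β)⁻¹ with hk
  set Cm : EuclideanSpace ℝ (Fin d) → EuclideanSpace ℝ (Fin m) :=
    fun w => (WithLp.equiv 2 (Fin m → ℝ)).symm (fun j => c j w) with hCm
  -- derivative of Cm is the adjoint of A
  have hD : ∀ w, HasFDerivAt Cm (ContinuousLinearMap.adjoint (A w)) w := by
    intro w
    set B : EuclideanSpace ℝ (Fin d) →L[ℝ] EuclideanSpace ℝ (Fin m) :=
      (EuclideanSpace.equiv (Fin m) ℝ).symm.toContinuousLinearMap.comp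
        (ContinuousLinearMap.pi (fun j => (InnerProductSpace.toDual ℝ _ (c' j w) :
          EuclideanSpace ℝ (Fin d) →L[ℝ] ℝ))) with hBdef
    have h1 : HasFDerivAt (fun x => (fun j => c j x : Fin m → ℝ))
        (ContinuousLinearMap.pi (fun j => (InnerProductSpace.toDual ℝ _ (c' j w) :
          EuclideanSpace ℝ (Fin d) →L[ℝ] ℝ))) w :=
      hasFDerivAt_pi.2 (fun j => (hc' j w).hasFDerivAt)
    have hB : HasFDerivAt Cm B w :=
      ((EuclideanSpace.equiv (Fin m) ℝ).symm.toContinuousLinearMap.hasFDerivAt).comp w h1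
    have hadj : A w = ContinuousLinearMap.adjoint B := by
      rw [ContinuousLinearMap.eq_adjoint_iff]
      intro ν h
      rw [hA]
      simp only [hBdef, ContinuousLinearMap.coe_comp', Function.comp_apply,
        ContinuousLinearEquiv.coe_coe, PiLp.inner_apply, sum_inner, real_inner_smul_left]
      apply Finset.sum_congr rfl
      intro j _
      have : ((EuclideanSpace.equiv (Fin m) ℝ).symm
          ((ContinuousLinearMap.pi (fun j => (InnerProductSpace.toDual ℝ _ (c' j w) :
            EuclideanSpace ℝ (Fin d) →L[ℝ] ℝ))) h)) j = ⟪c' j w, h⟫_ℝ := rfl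
      rw [this]
      simp only [PiLp.inner_apply, RCLike.inner_apply, conj_trivial]
      rw [Finset.sum_mul]
      exact Finset.sum_congr rfl fun x _ => by
        simp [PiLp.smul_apply, smul_eq_mul]; ring
    rw [hadj, ContinuousLinearMap.adjoint_adjoint]
    exact hB
  have hDnorm : ∀ w ∈ U, ‖ContinuousLinearMap.adjoint (A w)‖ ≤ U2 := by
    intro w hw
    rw [LinearIsometryEquiv.norm_map]
    exact hABd w hw
  have hMV : ‖Cm u - Cm v‖ ≤ U2 * ‖u - v‖ :=
    hU.norm_image_sub_le_of_norm_hasFDerivWithin_le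
      (fun x hx => (hD x).hasFDerivWithinAt) hDnorm hv hu
  set pu : EuclideanSpace ℝ (Fin m) :=
    (WithLp.equiv 2 (Fin m → ℝ)).symm (fun j => max (μ j + β * c j u) 0) with hpu
  set pv : EuclideanSpace ℝ (Fin m) :=
    (WithLp.equiv 2 (Fin m → ℝ)).symm (fun j => max (μ j + β * c j v) 0) with hpv
  have hpu_norm : ‖pu‖ ≤ ‖μ‖ + β * U1 := by
    have h1 : ‖pu‖ ≤ ‖μ + β • Cm u‖ := by
      apply euclid_norm_le_of_abs_le
      intro j
      have hco : (μ + β • Cm u) j = μ j + β * c j u := by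
        simp [hCm, PiLp.add_apply, PiLp.smul_apply, WithLp.equiv_symm_apply, PiLp.toLp_apply, smul_eq_mul]
      rw [hco]
      have : |max (μ j + β * c j u) 0| = max (μ j + β * c j u) 0 :=
        abs_of_nonneg (le_max_right _ _)
      rw [show pu j = max (μ j + β * c j u) 0 from rfl, this]
      exact max_le (le_abs_self _) (abs_nonneg _)
    calc ‖pu‖ ≤ ‖μ + β • Cm u‖ := h1
      _ ≤ ‖μ‖ + ‖β • Cm u‖ := norm_add_le _ _
      _ = ‖μ‖ + β * ‖Cm u‖ := by rw [norm_smul, Real.norm_eq_abs, abs_of_pos hβ]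
      _ ≤ ‖μ‖ + β * U1 := by
          have := hcBd u hu
          nlinarith [this, hβ.le]
  have hpdiff : ‖pu - pv‖ ≤ β * (U2 * ‖u - v‖) := by
    have h1 : ‖pu - pv‖ ≤ ‖β • (Cm u - Cm v)‖ := by
      apply euclid_norm_le_of_abs_le
      intro j
      have hco : (β • (Cm u - Cm v)) j = (μ j + β * c j u) - (μ j + β * c j v) := by
        simp [hCm, PiLp.sub_apply, PiLp.smul_apply, WithLp.equiv_symm_apply, PiLp.toLp_apply, smul_eq_mul]
        ring
      rw [hco, show (pu - pv) j = max (μ j + β * c j u) 0 - max (μ j + β * c j v) 0 from rfl]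
      exact abs_max_sub_max_le_abs _ _ _
    calc ‖pu - pv‖ ≤ ‖β • (Cm u - Cm v)‖ := h1
      _ = β * ‖Cm u - Cm v‖ := by rw [norm_smul, Real.norm_eq_abs, abs_of_pos hβ]
      _ ≤ β * (U2 * ‖u - v‖) := by nlinarith [hMV, hβ.le]
  have hdecomp : G u - G v =
      (f' u - f' v) + ((A u - A v) pu + (A v) (pu - pv)) + k • (u - v) := by
    rw [hG u, hG v]
    simp only [ContinuousLinearMap.sub_apply, map_sub, smul_sub, ← hpu, ← hpv, ← hk]
    abel
  have t1 : ‖f' u - f' v‖ ≤ L1 * ‖u - v‖ := hfLip u hu v hv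
  have t2 : ‖(A u - A v) pu‖ ≤ (L2 * ‖u - v‖) * (‖μ‖ + β * U1) := by
    calc ‖(A u - A v) pu‖ ≤ ‖A u - A v‖ * ‖pu‖ := ContinuousLinearMap.le_opNorm _ _
      _ ≤ (L2 * ‖u - v‖) * (‖μ‖ + β * U1) := by
          have h1 := hALip u hu v hv
          have h2 := norm_nonneg (A u - A v)
          have h3 := norm_nonneg pu
          nlinarith [norm_nonneg (u - v), norm_nonneg μ]
  have t3 : ‖(A v) (pu - pv)‖ ≤ U2 * (β * (U2 * ‖u - v‖)) := by
    calc ‖(A v) (pu - pv)‖ ≤ ‖A v‖ * ‖pu - pv‖ := ContinuousLinearMap.le_opNorm _ _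
      _ ≤ U2 * (β * (U2 * ‖u - v‖)) := by
          have h1 := hABd v hv
          have h2 := norm_nonneg (A v)
          have h3 := norm_nonneg (pu - pv)
          nlinarith [norm_nonneg (u - v), hβ.le]
  have t4 : ‖k • (u - v)‖ = k * ‖u - v‖ := by
    rw [norm_smul, Real.norm_eq_abs, abs_of_nonneg]
    positivity
  have hk1 : k = 1 / (((n : ℝ) + 1) * β) := by rw [hk, one_div]
  calc ‖G u - G v‖ = ‖(f' u - f' v) + ((A u - A v) pu + (A v) (pu - pv)) + k • (u - v)‖ := by
        rw [hdecomp]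
    _ ≤ ‖(f' u - f' v) + ((A u - A v) pu + (A v) (pu - pv))‖ + ‖k • (u - v)‖ := norm_add_le _ _
    _ ≤ ‖f' u - f' v‖ + ‖(A u - A v) pu + (A v) (pu - pv)‖ + ‖k • (u - v)‖ := by
        gcongr; exact norm_add_le _ _
    _ ≤ ‖f' u - f' v‖ + (‖(A u - A v) pu‖ + ‖(A v) (pu - pv)‖) + ‖k • (u - v)‖ := by
        gcongr; exact norm_add_le _ _
    _ ≤ L1 * ‖u - v‖ + ((L2 * ‖u - v‖) * (‖μ‖ + β * U1) + U2 * (β * (U2 * ‖u - v‖)))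
        + k * ‖u - v‖ := by rw [t4]; gcongr
    _ = (L1 + (‖μ‖ + β * U1) * L2 + β * U2 ^ 2 + 1 / (((n : ℝ) + 1) * β)) * ‖u - v‖ := by
        rw [hk1]; ring
end

section
/- Let P_0, P_1, …, P_n : ℝ^d → ℝ be differentiable, h : ℝ^d → ℝ convex, ρ_1, …, ρ_n > 0, and ε ≥ 0. Let w ∈ ℝ^d and, for 1 ≤ i ≤ n, let u_i, λ_i ∈ ℝ^d and set ũ_i = u_i + λ_i/ρ_i. Suppose there exists a subgradient g of h at w such that ‖∇P_0(w) + g + Σ_{i=1}^n ρ_i(w − ũ_i)‖_∞ ≤ ε. For 1 ≤ i ≤ n set ε̃_i = ‖∇P_i(w) + λ_i − ρ_i(w − u_i)‖_∞. Then there exists a subgradient g' of h at w such that ‖Σ_{i=0}^n ∇P_i(w) + g'‖_∞ ≤ ε + Σ_{i=1}^n ε̃_i. -/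
open scoped RealInnerProductSpace

lemma linf_add' {d : ℕ} (a b : EuclideanSpace ℝ (Fin d)) : linf (a+b) ≤ linf a + linf b :=
  norm_add_le _ _

lemma linf_sum' {d n : ℕ} (f : Fin n → EuclideanSpace ℝ (Fin d)) :
    linf (∑ i, f i) ≤ ∑ i, linf (f i) := by
  unfold linf
  rw [show (WithLp.equiv 2 (Fin d → ℝ)) (∑ i, f i) = ∑ i, (WithLp.equiv 2 (Fin d → ℝ)) (f i) from
    map_sum (WithLp.linearEquiv 2 ℝ (Fin d → ℝ)) f Finset.univ]
  exact norm_sum_le _ _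

/-- Theorem 4.1 (output of the inexact ADMM based FL algorithm): if the server
subproblem is solved to ℓ∞-accuracy `ε`, i.e. there is a subgradient `g` of `h` at
`w` with `‖∇P₀(w) + g + Σ_i ρ_i(w − ũ_i)‖_∞ ≤ ε` where `ũ_i = u_i + λ_i/ρ_i`, and
`ε̃_i = ‖∇P_i(w) + λ_i − ρ_i(w − u_i)‖_∞`, then there is a subgradient `g'` of `h`
at `w` with `‖Σ_{i=0}^n ∇P_i(w) + g'‖_∞ ≤ ε + Σ_i ε̃_i`. -/
theorem stmt_9 {d : ℕ} (n : ℕ)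
    (P0 : EuclideanSpace ℝ (Fin d) → ℝ) (P0' : EuclideanSpace ℝ (Fin d) → EuclideanSpace ℝ (Fin d))
    (hP0 : ∀ x, HasGradientAt P0 (P0' x) x)
    (P : Fin n → EuclideanSpace ℝ (Fin d) → ℝ)
    (P' : Fin n → EuclideanSpace ℝ (Fin d) → EuclideanSpace ℝ (Fin d))
    (hP : ∀ i x, HasGradientAt (P i) (P' i x) x)
    (h : EuclideanSpace ℝ (Fin d) → ℝ) (hh : ConvexOn ℝ Set.univ h)
    (ρ : Fin n → ℝ) (hρ : ∀ i, 0 < ρ i) (ε : ℝ) (hε : 0 ≤ ε)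
    (w : EuclideanSpace ℝ (Fin d)) (u lam : Fin n → EuclideanSpace ℝ (Fin d))
    (utilde : Fin n → EuclideanSpace ℝ (Fin d))
    (hutilde : ∀ i, utilde i = u i + (ρ i)⁻¹ • lam i)
    (hstat : ∃ g : EuclideanSpace ℝ (Fin d),
      (∀ y, h w + ⟪g, y - w⟫ ≤ h y) ∧
      linf (P0' w + g + ∑ i, ρ i • (w - utilde i)) ≤ ε) :
    ∃ g' : EuclideanSpace ℝ (Fin d),
      (∀ y, h w + ⟪g', y - w⟫ ≤ h y) ∧
      linf (P0' w + ∑ i, P' i w + g') ≤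
        ε + ∑ i, linf (P' i w + lam i - ρ i • (w - u i)) := by
  
  obtain ⟨g, hg, hgε⟩ := hstat
  refine ⟨g, hg, ?_⟩
  have hterm : ∀ i, ρ i • (w - utilde i) = ρ i • (w - u i) - lam i := by
    intro i
    rw [hutilde i]
    rw [show w - (u i + (ρ i)⁻¹ • lam i) = (w - u i) - (ρ i)⁻¹ • lam i by abel]
    rw [smul_sub, smul_smul, mul_inv_cancel₀ (hρ i).ne', one_smul]
  have key : P0' w + ∑ i, P' i w + g =
      (P0' w + g + ∑ i, ρ i • (w - utilde i)) +
        ∑ i, (P' i w + lam i - ρ i • (w - u i)) := by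
    simp only [hterm]
    rw [add_assoc (P0' w + g) (∑ i, (ρ i • (w - u i) - lam i))
        (∑ i, (P' i w + lam i - ρ i • (w - u i))), ← Finset.sum_add_distrib]
    have : ∀ i : Fin n,
        (ρ i • (w - u i) - lam i) + (P' i w + lam i - ρ i • (w - u i)) = P' i w := by
      intro i; abel
    simp only [this]
    abel
  rw [key]
  calc linf _ ≤ linf (P0' w + g + ∑ i, ρ i • (w - utilde i)) +
        linf (∑ i, (P' i w + lam i - ρ i • (w - u i))) := linf_add' _ _
    _ ≤ ε + ∑ i, linf (P' i w + lam i - ρ i • (w - u i)) :=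
        add_le_add hgε (linf_sum' _)
end

section
/- Let σ > 0 and let P_0, P_1, …, P_n : ℝ^d → ℝ be differentiable with σ-strongly monotone gradients, i.e., ⟨∇P_i(x) − ∇P_i(y), x − y⟩ ≥ σ‖x − y‖² for all x, y and all 0 ≤ i ≤ n; let h : ℝ^d → ℝ be convex, ρ_1, …, ρ_n > 0, and ε ≥ 0. Let (w*, λ_1*, …, λ_n*, h*) be a KKT point: h* is a subgradient of h at w*, ∇P_i(w*) + λ_i* = 0 for 1 ≤ i ≤ n, and ∇P_0(w*) + h* − Σ_{i=1}^n λ_i* = 0. Let u_i, λ_i ∈ ℝ^d (old iterates) and w⁺, u_i⁺ ∈ ℝ^d (new iterates), set λ_i⁺ = λ_i + ρ_i(u_i⁺ − w⁺), and assume: there is a subgradient h⁺ of h at w⁺ such that ‖∇P_0(w⁺) + h⁺ + Σ_{i=1}^n (ρ_i(u_i⁺ − u_i) − λ_i⁺)‖ ≤ ε, and ‖∇P_i(u_i⁺) + λ_i⁺‖ ≤ ε for each 1 ≤ i ≤ n. Then (σ/2)(‖w⁺ − w*‖² + Σ_{i=1}^n ‖u_i⁺ − w*‖²) + Σ_{i=1}^n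 (ρ_i/2)‖w⁺ − u_i‖² ≤ Σ_{i=1}^n [ (ρ_i/2)‖w* − u_i‖² + (1/(2ρ_i))‖λ_i* − λ_i‖² − (ρ_i/2)‖w* − u_i⁺‖² − (1/(2ρ_i))‖λ_i* − λ_i⁺‖² ] + ((n+1)/(2σ))·ε². -/
open scoped RealInnerProductSpace

lemma bracket_id {E : Type*} [NormedAddCommGroup E] [InnerProductSpace ℝ E]
    (ρ : ℝ) (hρ : ρ ≠ 0) (lam lams up u wp ws : E) :
    ⟪(lam + ρ • (up - wp)) - lams - ρ • (up - u), wp - ws⟫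
      + ⟪lams - (lam + ρ • (up - wp)), up - ws⟫
    = (ρ/2) * ‖ws - u‖^2 + (1/(2*ρ)) * ‖lams - lam‖^2 - (ρ/2) * ‖ws - up‖^2
      - (1/(2*ρ)) * ‖lams - (lam + ρ • (up - wp))‖^2 - (ρ/2) * ‖wp - u‖^2 := by
  simp only [← real_inner_self_eq_norm_sq, inner_sub_left, inner_sub_right,
    inner_add_left, inner_add_right, real_inner_smul_left, real_inner_smul_right,
    real_inner_comm]
  field_simp
  ring

lemma err_bd {E : Type*} [NormedAddCommGroup E] [InnerProductSpace ℝ E]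
    (σ ε : ℝ) (hσ : 0 < σ) (e x : E) (he : ‖e‖ ≤ ε) :
    ⟪e, x⟫ ≤ (σ/2) * ‖x‖^2 + ε^2/(2*σ) := by
  have h1 : ⟪e, x⟫ ≤ ‖e‖ * ‖x‖ := real_inner_le_norm e x
  have h2 : ‖e‖ * ‖x‖ ≤ ε * ‖x‖ := mul_le_mul_of_nonneg_right he (norm_nonneg x)
  have key : (σ/2) * ‖x‖^2 + ε^2/(2*σ) - ε * ‖x‖ = (σ * ‖x‖ - ε)^2 / (2*σ) := by
    field_simp; ring
  have pos : 0 ≤ (σ * ‖x‖ - ε)^2 / (2*σ) := by positivity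
  linarith

/-- One-step descent inequality for the inexact ADMM on the consensus reformulation:
with σ-strongly monotone gradients, a KKT point `(w*, λ*, h*)`, inexactly solved
server and client subproblems (accuracy `ε`), and `λ_i⁺ = λ_i + ρ_i(u_i⁺ − w⁺)`,
`(σ/2)(‖w⁺ − w*‖² + Σ_i ‖u_i⁺ − w*‖²) + Σ_i (ρ_i/2)‖w⁺ − u_i‖²
  ≤ Σ_i [(ρ_i/2)‖w* − u_i‖² + (1/2ρ_i)‖λ_i* − λ_i‖²
        − (ρ_i/2)‖w* − u_i⁺‖² − (1/2ρ_i)‖λ_i* − λ_i⁺‖²] + ((n+1)/(2σ))ε²`. -/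
theorem stmt_10 {d : ℕ} (n : ℕ) (hn : 1 ≤ n) (σ : ℝ) (hσ : 0 < σ)
    (P0 : EuclideanSpace ℝ (Fin d) → ℝ) (P0' : EuclideanSpace ℝ (Fin d) → EuclideanSpace ℝ (Fin d))
    (hP0 : ∀ x, HasGradientAt P0 (P0' x) x)
    (P : Fin n → EuclideanSpace ℝ (Fin d) → ℝ)
    (P' : Fin n → EuclideanSpace ℝ (Fin d) → EuclideanSpace ℝ (Fin d))
    (hP : ∀ i x, HasGradientAt (P i) (P' i x) x)
    (hmono0 : ∀ x y, σ * ‖x - y‖ ^ 2 ≤ ⟪P0' x - P0' y, x - y⟫)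
    (hmono : ∀ i, ∀ x y, σ * ‖x - y‖ ^ 2 ≤ ⟪P' i x - P' i y, x - y⟫)
    (h : EuclideanSpace ℝ (Fin d) → ℝ) (hh : ConvexOn ℝ Set.univ h)
    (ρ : Fin n → ℝ) (hρ : ∀ i, 0 < ρ i) (ε : ℝ) (hε : 0 ≤ ε)
    -- KKT point
    (wstar : EuclideanSpace ℝ (Fin d)) (lamstar : Fin n → EuclideanSpace ℝ (Fin d))
    (hstar : EuclideanSpace ℝ (Fin d))
    (hsubstar : ∀ y, h wstar + ⟪hstar, y - wstar⟫ ≤ h y)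
    (hKKT1 : ∀ i, P' i wstar + lamstar i = 0)
    (hKKT2 : P0' wstar + hstar - ∑ i, lamstar i = 0)
    -- old and new iterates
    (u lam : Fin n → EuclideanSpace ℝ (Fin d))
    (wplus : EuclideanSpace ℝ (Fin d)) (uplus : Fin n → EuclideanSpace ℝ (Fin d))
    (lamplus : Fin n → EuclideanSpace ℝ (Fin d))
    (hlamplus : ∀ i, lamplus i = lam i + ρ i • (uplus i - wplus))
    (hserver : ∃ hplus : EuclideanSpace ℝ (Fin d),
      (∀ y, h wplus + ⟪hplus, y - wplus⟫ ≤ h y) ∧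
      ‖P0' wplus + hplus + ∑ i, (ρ i • (uplus i - u i) - lamplus i)‖ ≤ ε)
    (hclient : ∀ i, ‖P' i (uplus i) + lamplus i‖ ≤ ε) :
    (σ / 2) * (‖wplus - wstar‖ ^ 2 + ∑ i, ‖uplus i - wstar‖ ^ 2) +
        ∑ i, (ρ i / 2) * ‖wplus - u i‖ ^ 2 ≤
      (∑ i, ((ρ i / 2) * ‖wstar - u i‖ ^ 2 + (1 / (2 * ρ i)) * ‖lamstar i - lam i‖ ^ 2 -
        (ρ i / 2) * ‖wstar - uplus i‖ ^ 2 - (1 / (2 * ρ i)) * ‖lamstar i - lamplus i‖ ^ 2)) +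
      (((n : ℝ) + 1) / (2 * σ)) * ε ^ 2 := by
  obtain ⟨hplus, hsub, hserr⟩ := hserver
  have hsum_eq : (∑ i, lamstar i) = P0' wstar + hstar := (sub_eq_zero.mp hKKT2).symm
  -- server monotonicity + subgradient monotonicity
  have hsubpos : 0 ≤ ⟪hplus - hstar, wplus - wstar⟫ := by
    have h1 := hsub wstar
    have h2 := hsubstar wplus
    have h3 : ⟪hplus, wstar - wplus⟫ = - ⟪hplus, wplus - wstar⟫ := by
      rw [← inner_neg_right]; congr 1; abel
    rw [h3] at h1
    rw [inner_sub_left]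
    linarith
  have hserverineq : σ * ‖wplus - wstar‖^2
      ≤ ⟪P0' wplus + hplus - ∑ i, lamstar i, wplus - wstar⟫ := by
    have hm := hmono0 wplus wstar
    have hveq : P0' wplus + hplus - ∑ i, lamstar i
        = (P0' wplus - P0' wstar) + (hplus - hstar) := by rw [hsum_eq]; abel
    rw [hveq, inner_add_left]
    linarith
  -- split server vector into error + multiplier part
  have hsplit : P0' wplus + hplus - ∑ i, lamstar i
      = (P0' wplus + hplus + ∑ i, (ρ i • (uplus i - u i) - lamplus i))
        + ∑ i, (lamplus i - lamstar i - ρ i • (uplus i - u i)) := by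
    have h1 : (∑ i, (ρ i • (uplus i - u i) - lamplus i))
        + ∑ i, (lamplus i - lamstar i - ρ i • (uplus i - u i))
        = ∑ i, (-lamstar i) := by
      rw [← Finset.sum_add_distrib]
      exact Finset.sum_congr rfl fun i _ => by abel
    have h2 : (∑ i : Fin n, (-lamstar i)) = -∑ i, lamstar i := by
      simp
    calc P0' wplus + hplus - ∑ i, lamstar i
        = P0' wplus + hplus + ((∑ i, (ρ i • (uplus i - u i) - lamplus i))
            + ∑ i, (lamplus i - lamstar i - ρ i • (uplus i - u i))) := by
          rw [h1, h2]; abel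
      _ = _ := by abel
  have hserr2 := err_bd σ ε hσ
    (P0' wplus + hplus + ∑ i, (ρ i • (uplus i - u i) - lamplus i)) (wplus - wstar) hserr
  have hserverfinal : (σ/2) * ‖wplus - wstar‖^2
      ≤ (∑ i, ⟪lamplus i - lamstar i - ρ i • (uplus i - u i), wplus - wstar⟫)
        + ε^2/(2*σ) := by
    have hthis := hserverineq
    rw [hsplit, inner_add_left, sum_inner] at hthis
    linarith
  -- per-client inequality
  have hclientfinal : ∀ i, (σ/2) * ‖uplus i - wstar‖^2 + (ρ i/2) * ‖wplus - u i‖^2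
      + ⟪lamplus i - lamstar i - ρ i • (uplus i - u i), wplus - wstar⟫
      ≤ ((ρ i / 2) * ‖wstar - u i‖ ^ 2 + (1 / (2 * ρ i)) * ‖lamstar i - lam i‖ ^ 2 -
          (ρ i / 2) * ‖wstar - uplus i‖ ^ 2 - (1 / (2 * ρ i)) * ‖lamstar i - lamplus i‖ ^ 2)
        + ε^2/(2*σ) := by
    intro i
    have hmi := hmono i (uplus i) wstar
    have hPstar : P' i wstar = - lamstar i := eq_neg_of_add_eq_zero_left (hKKT1 i)
    have hmi' : σ * ‖uplus i - wstar‖^2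
        ≤ ⟪P' i (uplus i) + lamstar i, uplus i - wstar⟫ := by
      rw [hPstar, sub_neg_eq_add] at hmi; exact hmi
    have hdecomp : P' i (uplus i) + lamstar i
        = (P' i (uplus i) + lamplus i) + (lamstar i - lamplus i) := by abel
    rw [hdecomp, inner_add_left] at hmi'
    have herr := err_bd σ ε hσ (P' i (uplus i) + lamplus i) (uplus i - wstar) (hclient i)
    have hbr := bracket_id (ρ i) (ne_of_gt (hρ i)) (lam i) (lamstar i) (uplus i) (u i)
      wplus wstar
    rw [← hlamplus i] at hbr
    linarith
  -- sum the per-client inequalities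
  have hcard : (∑ _i : Fin n, ε^2/(2*σ)) = (n : ℝ) * (ε^2/(2*σ)) := by
    simp [Finset.sum_const, mul_comm]
  have hsum2 : (∑ i, ((σ/2) * ‖uplus i - wstar‖^2)) + (∑ i, ((ρ i/2) * ‖wplus - u i‖^2))
      + (∑ i, ⟪lamplus i - lamstar i - ρ i • (uplus i - u i), wplus - wstar⟫)
      ≤ (∑ i, ((ρ i / 2) * ‖wstar - u i‖ ^ 2 + (1 / (2 * ρ i)) * ‖lamstar i - lam i‖ ^ 2 -
          (ρ i / 2) * ‖wstar - uplus i‖ ^ 2 - (1 / (2 * ρ i)) * ‖lamstar i - lamplus i‖ ^ 2))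
        + (n : ℝ) * (ε^2/(2*σ)) := by
    have hs := Finset.sum_le_sum (fun i (_ : i ∈ Finset.univ) => hclientfinal i)
    rw [Finset.sum_add_distrib, Finset.sum_add_distrib, Finset.sum_add_distrib, hcard] at hs
    exact hs
  have hconst : ((n : ℝ) + 1) / (2 * σ) * ε ^ 2
      = (n : ℝ) * (ε^2/(2*σ)) + ε^2/(2*σ) := by
    field_simp
  have hlhs : (σ / 2) * (‖wplus - wstar‖ ^ 2 + ∑ i, ‖uplus i - wstar‖ ^ 2)
      = (σ/2) * ‖wplus - wstar‖^2 + ∑ i, ((σ/2) * ‖uplus i - wstar‖^2) := by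
    rw [mul_add, Finset.mul_sum]
  rw [hlhs, hconst]
  linarith
end

section
/- Let σ > 0, q ∈ (0,1), let P_0, …, P_n : ℝ^d → ℝ be differentiable with ⟨∇P_i(x) − ∇P_i(y), x − y⟩ ≥ σ‖x − y‖² for all x, y and all i; let h : ℝ^d → ℝ be convex and ρ_1, …, ρ_n > 0. Let (w̃*, λ_1*, …, λ_n*, h*) be a KKT point: h* is a subgradient of h at w̃*, ∇P_i(w̃*) + λ_i* = 0 (1 ≤ i ≤ n), and ∇P_0(w̃*) + h* − Σ_i λ_i* = 0. Let w̃⁰ ∈ ℝ^d and suppose sequences (w^{t+1})_{t≥0}, (u_i^t)_{t≥0}, (λ_i^t)_{t≥0} satisfy the ADMM iterate conditions with initial point w̃⁰ and tolerances q^t. Then for every t ≥ 0 and every 1 ≤ i ≤ n, both ‖w^{t+1} − w̃*‖² and ‖u_i^{t+1} − w̃*‖² are at most (n+1)/(σ²(1 − q²)) + (1/σ)·Σ_{i=1}^n ( ρ_i‖w̃* − w̃⁰‖² + (1/ρ_i)‖∇P_i(w̃*) − ∇P_i(w̃⁰)‖² ). -/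
open scoped RealInnerProductSpace
open Finset

section auxlemmas
variable {E : Type*} [NormedAddCommGroup E] [InnerProductSpace ℝ E]

private lemma inner_half_id (a b c : E) :
    ⟪a - c, a - b⟫ = (‖a - c‖ ^ 2 + ‖a - b‖ ^ 2 - ‖b - c‖ ^ 2) / 2 := by
  have h : ‖b - c‖ ^ 2 = ‖a - c‖ ^ 2 - 2 * ⟪a - c, a - b⟫ + ‖a - b‖ ^ 2 := by
    rw [show b - c = (a - c) - (a - b) by abel, norm_sub_sq_real]
  rw [h]; ring

private lemma young_inner_aux (ρ : ℝ) (hρ : 0 < ρ) (x y : E) :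
    ⟪x, y⟫ ≤ ρ / 2 * ‖x‖ ^ 2 + 1 / (2 * ρ) * ‖y‖ ^ 2 := by
  have h3 : (0:ℝ) < 2 * ρ := by linarith
  have heq : ρ / 2 * ‖x‖ ^ 2 + 1 / (2 * ρ) * ‖y‖ ^ 2
      = (ρ ^ 2 * ‖x‖ ^ 2 + ‖y‖ ^ 2) / (2 * ρ) := by
    field_simp
  rw [heq, le_div_iff₀ h3]
  nlinarith [real_inner_le_norm x y, sq_nonneg (ρ * ‖x‖ - ‖y‖), norm_nonneg x, norm_nonneg y, hρ]

private lemma err_inner_aux (σ c : ℝ) (hσ : 0 < σ) (e x : E) (hc : ‖e‖ ≤ c) :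
    ⟪e, x⟫ ≤ c ^ 2 / (2 * σ) + σ / 2 * ‖x‖ ^ 2 := by
  have h3 : (0:ℝ) < 2 * σ := by linarith
  have heq : c ^ 2 / (2 * σ) + σ / 2 * ‖x‖ ^ 2 = (c ^ 2 + σ ^ 2 * ‖x‖ ^ 2) / (2 * σ) := by
    field_simp
  rw [heq, le_div_iff₀ h3]
  have h1 : ⟪e, x⟫ ≤ ‖e‖ * ‖x‖ := real_inner_le_norm e x
  have h2 : ‖e‖ * ‖x‖ ≤ c * ‖x‖ := mul_le_mul_of_nonneg_right hc (norm_nonneg x)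
  have h12 : ⟪e, x⟫ ≤ c * ‖x‖ := h1.trans h2
  nlinarith [h12, sq_nonneg (c - σ * ‖x‖), hσ]

private lemma cross_ineq (ρ : ℝ) (hρ : 0 < ρ) (l' l ls u' u w' ws : E)
    (hrel : l' - l = ρ • (u' - w')) :
    ⟪l' - ls, w' - u'⟫ - ρ * ⟪u' - u, w' - ws⟫ ≤
      (ρ⁻¹ * (‖l - ls‖ ^ 2 - ‖l' - ls‖ ^ 2) + ρ * (‖u - ws‖ ^ 2 - ‖u' - ws‖ ^ 2)) / 2 := by
  have hρ0 : ρ ≠ 0 := ne_of_gt hρ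
  have huw : u' - w' = ρ⁻¹ • (l' - l) := by
    rw [hrel, smul_smul, inv_mul_cancel₀ hρ0, one_smul]
  have h1 : ⟪l' - ls, w' - u'⟫ = -(ρ⁻¹ * ⟪l' - ls, l' - l⟫) := by
    have hwu : w' - u' = -(ρ⁻¹ • (l' - l)) := by rw [← huw]; abel
    rw [hwu, inner_neg_right, real_inner_smul_right]
  have h2 : ⟪u' - u, w' - ws⟫ = ⟪u' - u, u' - ws⟫ - ρ⁻¹ * ⟪u' - u, l' - l⟫ := by
    have hw : w' - ws = (u' - ws) - (u' - w') := by abel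
    rw [hw, inner_sub_right, huw, real_inner_smul_right]
  have h3 := inner_half_id l' l ls
  have h4 : ⟪u' - u, u' - ws⟫ = (‖u' - ws‖ ^ 2 + ‖u' - u‖ ^ 2 - ‖u - ws‖ ^ 2) / 2 := by
    rw [real_inner_comm]; exact inner_half_id u' u ws
  have h5 : ⟪u' - u, l' - l⟫ ≤ ρ / 2 * ‖u' - u‖ ^ 2 + 1 / (2 * ρ) * ‖l' - l‖ ^ 2 :=
    young_inner_aux ρ hρ (u' - u) (l' - l)
  have hmain : ⟪l' - ls, w' - u'⟫ - ρ * ⟪u' - u, w' - ws⟫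
      = -(ρ⁻¹ * ((‖l' - ls‖ ^ 2 + ‖l' - l‖ ^ 2 - ‖l - ls‖ ^ 2) / 2))
        - ρ * ((‖u' - ws‖ ^ 2 + ‖u' - u‖ ^ 2 - ‖u - ws‖ ^ 2) / 2)
        + ⟪u' - u, l' - l⟫ := by
    rw [h1, h2, h4, h3]
    linear_combination (inner ℝ (u' - u) (l' - l) : ℝ) * (mul_inv_cancel₀ hρ0)
  rw [hmain]
  have hinv : 1 / (2 * ρ) = ρ⁻¹ / 2 := by
    field_simp
  rw [hinv] at h5
  nlinarith [h5]

end auxlemmas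

set_option maxHeartbeats 2000000 in
/-- Lemma 4.2 (bounded iterates of the inexact ADMM): under the ADMM iterate
conditions with initial point `w̃⁰` and tolerances `q^t`, for every `t` and `i`,
both `‖w^{t+1} − w̃*‖²` and `‖u_i^{t+1} − w̃*‖²` are at most
`(n+1)/(σ²(1−q²)) + (1/σ) Σ_i (ρ_i‖w̃* − w̃⁰‖² + (1/ρ_i)‖∇P_i(w̃*) − ∇P_i(w̃⁰)‖²)`. -/
theorem stmt_11 {d : ℕ} (n : ℕ) (hn : 1 ≤ n) (σ q : ℝ) (hσ : 0 < σ)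
    (hq0 : 0 < q) (hq1 : q < 1)
    (P0 : EuclideanSpace ℝ (Fin d) → ℝ) (P0' : EuclideanSpace ℝ (Fin d) → EuclideanSpace ℝ (Fin d))
    (hP0 : ∀ x, HasGradientAt P0 (P0' x) x)
    (P : Fin n → EuclideanSpace ℝ (Fin d) → ℝ)
    (P' : Fin n → EuclideanSpace ℝ (Fin d) → EuclideanSpace ℝ (Fin d))
    (hP : ∀ i x, HasGradientAt (P i) (P' i x) x)
    (hmono0 : ∀ x y, σ * ‖x - y‖ ^ 2 ≤ ⟪P0' x - P0' y, x - y⟫)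
    (hmono : ∀ i, ∀ x y, σ * ‖x - y‖ ^ 2 ≤ ⟪P' i x - P' i y, x - y⟫)
    (h : EuclideanSpace ℝ (Fin d) → ℝ) (hh : ConvexOn ℝ Set.univ h)
    (ρ : Fin n → ℝ) (hρ : ∀ i, 0 < ρ i)
    -- KKT point
    (wstar : EuclideanSpace ℝ (Fin d)) (lamstar : Fin n → EuclideanSpace ℝ (Fin d))
    (hstar : EuclideanSpace ℝ (Fin d))
    (hsubstar : ∀ y, h wstar + ⟪hstar, y - wstar⟫ ≤ h y)
    (hKKT1 : ∀ i, P' i wstar + lamstar i = 0)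
    (hKKT2 : P0' wstar + hstar - ∑ i, lamstar i = 0)
    -- ADMM iterate conditions with initial point w̃⁰ and tolerances q^t
    (w0 : EuclideanSpace ℝ (Fin d))
    (w : ℕ → EuclideanSpace ℝ (Fin d)) (u lam : Fin n → ℕ → EuclideanSpace ℝ (Fin d))
    (hinit_u : ∀ i, u i 0 = w0) (hinit_lam : ∀ i, lam i 0 = -P' i w0)
    (hlam : ∀ i, ∀ t : ℕ, lam i (t + 1) = lam i t + ρ i • (u i (t + 1) - w (t + 1)))
    (hserver : ∀ t : ℕ, ∃ ht1 : EuclideanSpace ℝ (Fin d),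
      (∀ y, h (w (t + 1)) + ⟪ht1, y - w (t + 1)⟫ ≤ h y) ∧
      ‖P0' (w (t + 1)) + ht1 +
        ∑ i, (ρ i • (u i (t + 1) - u i t) - lam i (t + 1))‖ ≤ q ^ t)
    (hclient : ∀ i, ∀ t : ℕ, ‖P' i (u i (t + 1)) + lam i (t + 1)‖ ≤ q ^ t) :
    ∀ t : ℕ, ∀ i : Fin n,
      ‖w (t + 1) - wstar‖ ^ 2 ≤
          ((n : ℝ) + 1) / (σ ^ 2 * (1 - q ^ 2)) +
            (1 / σ) * ∑ i, (ρ i * ‖wstar - w0‖ ^ 2 +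
              (1 / ρ i) * ‖P' i wstar - P' i w0‖ ^ 2) ∧
      ‖u i (t + 1) - wstar‖ ^ 2 ≤
          ((n : ℝ) + 1) / (σ ^ 2 * (1 - q ^ 2)) +
            (1 / σ) * ∑ i, (ρ i * ‖wstar - w0‖ ^ 2 +
              (1 / ρ i) * ‖P' i wstar - P' i w0‖ ^ 2) := by
  have hσ0 : σ ≠ 0 := ne_of_gt hσ
  have hq2 : q ^ 2 < 1 := by nlinarith
  have hq2' : (0:ℝ) ≤ q ^ 2 := sq_nonneg q
  have hlamstar : ∀ j, lamstar j = -P' j wstar :=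
    fun j => eq_neg_of_add_eq_zero_right (hKKT1 j)
  -- the Lyapunov function
  set V : ℕ → ℝ := fun s =>
    ∑ j, ((ρ j)⁻¹ * ‖lam j s - lamstar j‖ ^ 2 + ρ j * ‖u j s - wstar‖ ^ 2) with hVdef
  have hV0 : V 0 = ∑ j, (ρ j * ‖wstar - w0‖ ^ 2 + (1 / ρ j) * ‖P' j wstar - P' j w0‖ ^ 2) := by
    rw [hVdef]
    apply Finset.sum_congr rfl
    intro j _
    rw [hinit_u j, hinit_lam j, hlamstar j,
      show -P' j w0 - -P' j wstar = P' j wstar - P' j w0 by abel,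
      norm_sub_rev w0 wstar]
    ring
  have hVnn : ∀ s, 0 ≤ V s := by
    intro s
    apply Finset.sum_nonneg
    intro j _
    exact add_nonneg (mul_nonneg (inv_nonneg.mpr (hρ j).le) (sq_nonneg _))
      (mul_nonneg (hρ j).le (sq_nonneg _))
  -- the key one-step estimate
  have key : ∀ s : ℕ, σ * (‖w (s+1) - wstar‖ ^ 2 + ∑ j, ‖u j (s+1) - wstar‖ ^ 2) + V (s+1)
      ≤ ((n:ℝ) + 1) * (q ^ s) ^ 2 / σ + V s := by
    intro s
    obtain ⟨ht1, hsub1, hbound0⟩ := hserver s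
    set X := w (s+1) - wstar with hX
    set e0 := P0' (w (s+1)) + ht1 + ∑ j, (ρ j • (u j (s+1) - u j s) - lam j (s+1)) with he0
    -- monotonicity of the subdifferential of h
    have hmonoh : 0 ≤ ⟪ht1 - hstar, X⟫ := by
      have h1 := hsub1 wstar
      have h2 := hsubstar (w (s+1))
      rw [← hX] at h2
      rw [show wstar - w (s+1) = -X by rw [hX]; abel, inner_neg_right] at h1
      rw [inner_sub_left]
      linarith
    -- server inequality
    have hid : P0' (w (s+1)) - P0' wstar
        = e0 - (ht1 - hstar)
          + ∑ j, ((lam j (s+1) - lamstar j) - ρ j • (u j (s+1) - u j s)) := by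
      have h2 : P0' wstar + hstar = ∑ j, lamstar j := sub_eq_zero.mp hKKT2
      have h3 : P0' wstar = ∑ j, lamstar j - hstar := by rw [← h2]; abel
      rw [he0, h3]
      simp only [Finset.sum_sub_distrib]
      abel
    have hB : σ * ‖X‖ ^ 2 ≤ ⟪e0, X⟫
        + ∑ j, (⟪lam j (s+1) - lamstar j, X⟫ - ρ j * ⟪u j (s+1) - u j s, X⟫) := by
      have hm := hmono0 (w (s+1)) wstar
      rw [← hX] at hm
      have hi : ⟪P0' (w (s+1)) - P0' wstar, X⟫
          = ⟪e0, X⟫ - ⟪ht1 - hstar, X⟫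
            + ∑ j, (⟪lam j (s+1) - lamstar j, X⟫ - ρ j * ⟪u j (s+1) - u j s, X⟫) := by
        rw [hid, inner_add_left, inner_sub_left, sum_inner]
        congr 1
        apply Finset.sum_congr rfl
        intro j _
        rw [inner_sub_left, real_inner_smul_left]
      rw [hi] at hm
      linarith
    -- client inequalities combined with the dual update
    have hC : ∀ j : Fin n, σ * ‖u j (s+1) - wstar‖ ^ 2
        + (⟪lam j (s+1) - lamstar j, X⟫ - ρ j * ⟪u j (s+1) - u j s, X⟫)
        ≤ ⟪P' j (u j (s+1)) + lam j (s+1), u j (s+1) - wstar⟫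
          + ((ρ j)⁻¹ * (‖lam j s - lamstar j‖ ^ 2 - ‖lam j (s+1) - lamstar j‖ ^ 2)
            + ρ j * (‖u j s - wstar‖ ^ 2 - ‖u j (s+1) - wstar‖ ^ 2)) / 2 := by
      intro j
      have hm := hmono j (u j (s+1)) wstar
      have hPw : P' j wstar = -lamstar j := eq_neg_of_add_eq_zero_left (hKKT1 j)
      have hi : P' j (u j (s+1)) - P' j wstar
          = (P' j (u j (s+1)) + lam j (s+1)) - (lam j (s+1) - lamstar j) := by
        rw [hPw]; abel
      rw [hi, inner_sub_left] at hm
      have hrel : lam j (s+1) - lam j s = ρ j • (u j (s+1) - w (s+1)) := by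
        rw [hlam j s]; abel
      have hcr := cross_ineq (ρ j) (hρ j) (lam j (s+1)) (lam j s) (lamstar j)
        (u j (s+1)) (u j s) (w (s+1)) wstar hrel
      rw [← hX] at hcr
      have hsplit : ⟪lam j (s+1) - lamstar j, u j (s+1) - wstar⟫
          = ⟪lam j (s+1) - lamstar j, X⟫
            - ⟪lam j (s+1) - lamstar j, w (s+1) - u j (s+1)⟫ := by
        rw [← inner_sub_right]
        congr 1
        rw [hX]; abel
      rw [hsplit] at hm
      linarith
    have hsumC := Finset.sum_le_sum (fun j (_ : j ∈ Finset.univ) => hC j)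
    rw [Finset.sum_add_distrib, Finset.sum_add_distrib, ← Finset.mul_sum] at hsumC
    have hD : ∑ j, ((ρ j)⁻¹ * (‖lam j s - lamstar j‖ ^ 2 - ‖lam j (s+1) - lamstar j‖ ^ 2)
        + ρ j * (‖u j s - wstar‖ ^ 2 - ‖u j (s+1) - wstar‖ ^ 2)) / 2
        = (V s - V (s+1)) / 2 := by
      rw [hVdef, ← Finset.sum_div, ← Finset.sum_sub_distrib]
      congr 1
      apply Finset.sum_congr rfl
      intro j _
      ring
    rw [hD] at hsumC
    have herr0 : ⟪e0, X⟫ ≤ (q ^ s) ^ 2 / (2 * σ) + σ / 2 * ‖X‖ ^ 2 :=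
      err_inner_aux σ (q ^ s) hσ e0 X hbound0
    have hsumE : ∑ j, ⟪P' j (u j (s+1)) + lam j (s+1), u j (s+1) - wstar⟫
        ≤ (n:ℝ) * ((q ^ s) ^ 2 / (2 * σ)) + σ / 2 * ∑ j, ‖u j (s+1) - wstar‖ ^ 2 := by
      calc ∑ j, ⟪P' j (u j (s+1)) + lam j (s+1), u j (s+1) - wstar⟫
          ≤ ∑ j : Fin n, ((q ^ s) ^ 2 / (2 * σ) + σ / 2 * ‖u j (s+1) - wstar‖ ^ 2) :=
            Finset.sum_le_sum (fun j _ => err_inner_aux σ (q ^ s) hσ _ _ (hclient j s))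
        _ = (n:ℝ) * ((q ^ s) ^ 2 / (2 * σ)) + σ / 2 * ∑ j, ‖u j (s+1) - wstar‖ ^ 2 := by
            rw [Finset.sum_add_distrib, Finset.sum_const, ← Finset.mul_sum,
              Finset.card_univ, Fintype.card_fin, nsmul_eq_mul]
    have hgoal : σ * (‖X‖ ^ 2 + ∑ j, ‖u j (s+1) - wstar‖ ^ 2) + V (s+1)
        ≤ ((n:ℝ) + 1) * (q ^ s) ^ 2 / σ + V s := by
      have h2σ : (0:ℝ) < 2 * σ := by linarith
      have hexp : ((n:ℝ) + 1) * (q ^ s) ^ 2 / σ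
          = 2 * ((q ^ s) ^ 2 / (2 * σ)) + 2 * ((n:ℝ) * ((q ^ s) ^ 2 / (2 * σ))) := by
        field_simp; ring
      rw [hexp]
      linarith [hB, hsumC, herr0, hsumE]
    exact hgoal
  -- bound on the Lyapunov function by induction
  have hqq : ∀ s : ℕ, (q ^ s) ^ 2 = (q ^ 2) ^ s := by
    intro s; rw [← pow_mul, ← pow_mul, mul_comm]
  have hVb : ∀ s, V s ≤ (((n:ℝ) + 1) / σ) * ∑ r ∈ Finset.range s, (q ^ 2) ^ r + V 0 := by
    intro s
    induction s with
    | zero => simp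
    | succ s ih =>
      have hk := key s
      have hnn : 0 ≤ ‖w (s+1) - wstar‖ ^ 2 + ∑ j, ‖u j (s+1) - wstar‖ ^ 2 :=
        add_nonneg (sq_nonneg _) (Finset.sum_nonneg fun j _ => sq_nonneg _)
      have hσnn : 0 ≤ σ * (‖w (s+1) - wstar‖ ^ 2 + ∑ j, ‖u j (s+1) - wstar‖ ^ 2) :=
        mul_nonneg hσ.le hnn
      rw [hqq s] at hk
      rw [Finset.sum_range_succ]
      have hexp : (((n:ℝ) + 1) / σ) * (∑ r ∈ Finset.range s, (q ^ 2) ^ r + (q ^ 2) ^ s)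
          = (((n:ℝ) + 1) / σ) * ∑ r ∈ Finset.range s, (q ^ 2) ^ r
            + ((n:ℝ) + 1) * (q ^ 2) ^ s / σ := by ring
      rw [hexp]
      linarith
  -- geometric series bound
  have hgeom : ∀ m : ℕ, ∑ r ∈ Finset.range m, (q ^ 2) ^ r ≤ 1 / (1 - q ^ 2) := by
    intro m
    have hne : q ^ 2 ≠ 1 := ne_of_lt hq2
    rw [geom_sum_eq hne]
    rw [show ((q ^ 2) ^ m - 1) / (q ^ 2 - 1) = (1 - (q ^ 2) ^ m) / (1 - q ^ 2) by
      rw [show (1 - (q ^ 2) ^ m) = -((q ^ 2) ^ m - 1) by ring,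
        show (1 - q ^ 2) = -(q ^ 2 - 1) by ring, neg_div_neg_eq]]
    rw [div_le_div_iff₀ (by linarith) (by linarith)]
    have hpow : 0 ≤ (q ^ 2) ^ m := pow_nonneg hq2' m
    nlinarith
  -- conclusion
  intro t i
  have hk := key t
  have hVt := hVb t
  have hVt1 := hVnn (t + 1)
  have hg := hgeom (t + 1)
  rw [Finset.sum_range_succ] at hg
  have ha : (0:ℝ) ≤ ((n:ℝ) + 1) / σ := by positivity
  have h3 := mul_le_mul_of_nonneg_left hg ha
  rw [hqq t] at hk
  have hmain : σ * (‖w (t + 1) - wstar‖ ^ 2 + ∑ j, ‖u j (t + 1) - wstar‖ ^ 2)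
      ≤ ((n:ℝ) + 1) / (σ * (1 - q ^ 2)) + V 0 := by
    have heq1 : (((n:ℝ) + 1) / σ) * (1 / (1 - q ^ 2)) = ((n:ℝ) + 1) / (σ * (1 - q ^ 2)) := by
      rw [div_mul_div_comm, mul_one]
    have heq2 : (((n:ℝ) + 1) / σ) * (∑ r ∈ Finset.range t, (q ^ 2) ^ r + (q ^ 2) ^ t)
        = (((n:ℝ) + 1) / σ) * ∑ r ∈ Finset.range t, (q ^ 2) ^ r
          + ((n:ℝ) + 1) * (q ^ 2) ^ t / σ := by ring
    rw [heq1, heq2] at h3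
    linarith
  set S := ∑ i : Fin n, (ρ i * ‖wstar - w0‖ ^ 2 + (1 / ρ i) * ‖P' i wstar - P' i w0‖ ^ 2)
    with hS
  have hσB : σ * (((n:ℝ) + 1) / (σ ^ 2 * (1 - q ^ 2)) + (1 / σ) * S)
      = ((n:ℝ) + 1) / (σ * (1 - q ^ 2)) + V 0 := by
    rw [hV0]
    have h1q : (1:ℝ) - q ^ 2 ≠ 0 := ne_of_gt (by linarith)
    field_simp
  have hfin : ∀ a : ℝ, a ≤ ‖w (t + 1) - wstar‖ ^ 2 + ∑ j, ‖u j (t + 1) - wstar‖ ^ 2 →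
      a ≤ ((n:ℝ) + 1) / (σ ^ 2 * (1 - q ^ 2)) + (1 / σ) * S := by
    intro a hale
    have h1 : σ * a ≤ σ * (((n:ℝ) + 1) / (σ ^ 2 * (1 - q ^ 2)) + (1 / σ) * S) := by
      rw [hσB]
      calc σ * a ≤ σ * (‖w (t + 1) - wstar‖ ^ 2 + ∑ j, ‖u j (t + 1) - wstar‖ ^ 2) :=
            mul_le_mul_of_nonneg_left hale hσ.le
        _ ≤ _ := hmain
    exact le_of_mul_le_mul_left h1 hσ
  constructor
  · exact hfin _ (by
      have := Finset.sum_nonneg (fun j (_ : j ∈ (Finset.univ : Finset (Fin n))) =>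
        sq_nonneg ‖u j (t + 1) - wstar‖)
      linarith)
  · exact hfin _ (by
      have h1 : ‖u i (t + 1) - wstar‖ ^ 2 ≤ ∑ j, ‖u j (t + 1) - wstar‖ ^ 2 :=
        Finset.single_le_sum (fun j _ => sq_nonneg ‖u j (t + 1) - wstar‖) (Finset.mem_univ i)
      have h2 : (0:ℝ) ≤ ‖w (t + 1) - wstar‖ ^ 2 := sq_nonneg _
      linarith)
end

section
/- Assume the hypotheses of the one-step ADMM descent inequality: σ > 0, P_0, …, P_n : ℝ^d → ℝ differentiable with σ-strongly monotone gradients, h : ℝ^d → ℝ convex, ρ_i > 0, a KKT point (w*, λ_i*, h*) with ∇P_i(w*) + λ_i* = 0 (1 ≤ i ≤ n) and ∇P_0(w*) + h* − Σ_i λ_i* = 0 for a subgradient h* of h at w*, old iterates (u_i, λ_i), new iterates (w⁺, u_i⁺), λ_i⁺ = λ_i + ρ_i(u_i⁺ − w⁺), a subgradient h⁺ of h at w⁺ with ‖∇P_0(w⁺) + h⁺ + Σ_i (ρ_i(u_i⁺ − u_i) − λ_i⁺)‖ ≤ ε and ‖∇P_i(u_i⁺) + λ_i⁺‖ ≤ ε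 for all i, where ε = q^t for some q ∈ (0,1) and t ≥ 0. Assume additionally that for some L > 0 and each 1 ≤ i ≤ n, ‖∇P_i(w*) − ∇P_i(u_i⁺)‖ ≤ L‖w* − u_i⁺‖. Define S = Σ_{i=1}^n ( (ρ_i/2)‖w* − u_i‖² + (1/(2ρ_i))‖λ_i* − λ_i‖² ), S⁺ = Σ_{i=1}^n ( (ρ_i/2)‖w* − u_i⁺‖² + (1/(2ρ_i))‖λ_i* − λ_i⁺‖² ), and r = min_{1≤i≤n} σρ_i/(ρ_i² + 2L²). Then (1 + r)·S⁺ ≤ S + ( (n+1)/(2σ) + Σ_{i=1}^n σ/(ρ_i² + 2L²) )·q^{2t}. -/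
open scoped RealInnerProductSpace

lemma three_point' {E : Type*} [NormedAddCommGroup E] [InnerProductSpace ℝ E] (a b c : E) :
    ⟪b - a, c - b⟫ = (‖c - a‖ ^ 2 - ‖b - a‖ ^ 2 - ‖c - b‖ ^ 2) / 2 := by
  have h : ‖(c - b) + (b - a)‖ ^ 2 = ‖c - b‖ ^ 2 + 2 * ⟪c - b, b - a⟫ + ‖b - a‖ ^ 2 :=
    norm_add_sq_real _ _
  have h2 : (c - b) + (b - a) = c - a := by abel
  rw [h2] at h
  rw [real_inner_comm]
  linarith

lemma young' {E : Type*} [NormedAddCommGroup E] [InnerProductSpace ℝ E]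
    (c : ℝ) (hc : 0 < c) (a b : E) :
    ⟪a, b⟫ ≤ 1 / (2 * c) * ‖a‖ ^ 2 + c / 2 * ‖b‖ ^ 2 := by
  have h1 := real_inner_le_norm a b
  have h3 : ‖a‖ * ‖b‖ ≤ 1 / (2 * c) * ‖a‖ ^ 2 + c / 2 * ‖b‖ ^ 2 := by
    rw [← sub_nonneg]
    have : 1 / (2 * c) * ‖a‖ ^ 2 + c / 2 * ‖b‖ ^ 2 - ‖a‖ * ‖b‖
        = (‖a‖ - c * ‖b‖) ^ 2 / (2 * c) := by field_simp; ring
    rw [this]; positivity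
  linarith

set_option maxHeartbeats 1000000 in
/-- One-step contraction of the ADMM potential (key inequality in Lemma 4.3):
under the one-step descent hypotheses with accuracy `ε = q^t` and the Lipschitz
bound `‖∇P_i(w*) − ∇P_i(u_i⁺)‖ ≤ L‖w* − u_i⁺‖`, with
`S = Σ_i ((ρ_i/2)‖w* − u_i‖² + (1/2ρ_i)‖λ_i* − λ_i‖²)`,
`S⁺` the analogous quantity for the new iterates and
`r = min_i σρ_i/(ρ_i² + 2L²)`, one has
`(1+r) S⁺ ≤ S + ((n+1)/(2σ) + Σ_i σ/(ρ_i² + 2L²)) q^{2t}`. -/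
theorem stmt_12 {d : ℕ} (n : ℕ) (hn : 1 ≤ n) (σ q L : ℝ) (hσ : 0 < σ)
    (hq0 : 0 < q) (hq1 : q < 1) (hL : 0 < L) (t : ℕ)
    (P0 : EuclideanSpace ℝ (Fin d) → ℝ) (P0' : EuclideanSpace ℝ (Fin d) → EuclideanSpace ℝ (Fin d))
    (hP0 : ∀ x, HasGradientAt P0 (P0' x) x)
    (P : Fin n → EuclideanSpace ℝ (Fin d) → ℝ)
    (P' : Fin n → EuclideanSpace ℝ (Fin d) → EuclideanSpace ℝ (Fin d))
    (hP : ∀ i x, HasGradientAt (P i) (P' i x) x)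
    (hmono0 : ∀ x y, σ * ‖x - y‖ ^ 2 ≤ ⟪P0' x - P0' y, x - y⟫)
    (hmono : ∀ i, ∀ x y, σ * ‖x - y‖ ^ 2 ≤ ⟪P' i x - P' i y, x - y⟫)
    (h : EuclideanSpace ℝ (Fin d) → ℝ) (hh : ConvexOn ℝ Set.univ h)
    (ρ : Fin n → ℝ) (hρ : ∀ i, 0 < ρ i) (ε : ℝ) (hεq : ε = q ^ t)
    -- KKT point
    (wstar : EuclideanSpace ℝ (Fin d)) (lamstar : Fin n → EuclideanSpace ℝ (Fin d))
    (hstar : EuclideanSpace ℝ (Fin d))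
    (hsubstar : ∀ y, h wstar + ⟪hstar, y - wstar⟫ ≤ h y)
    (hKKT1 : ∀ i, P' i wstar + lamstar i = 0)
    (hKKT2 : P0' wstar + hstar - ∑ i, lamstar i = 0)
    -- old and new iterates
    (u lam : Fin n → EuclideanSpace ℝ (Fin d))
    (wplus : EuclideanSpace ℝ (Fin d)) (uplus : Fin n → EuclideanSpace ℝ (Fin d))
    (lamplus : Fin n → EuclideanSpace ℝ (Fin d))
    (hlamplus : ∀ i, lamplus i = lam i + ρ i • (uplus i - wplus))
    (hserver : ∃ hplus : EuclideanSpace ℝ (Fin d),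
      (∀ y, h wplus + ⟪hplus, y - wplus⟫ ≤ h y) ∧
      ‖P0' wplus + hplus + ∑ i, (ρ i • (uplus i - u i) - lamplus i)‖ ≤ ε)
    (hclient : ∀ i, ‖P' i (uplus i) + lamplus i‖ ≤ ε)
    -- Lipschitz bound at the new client iterates
    (hLip : ∀ i, ‖P' i wstar - P' i (uplus i)‖ ≤ L * ‖wstar - uplus i‖)
    -- potential values and contraction factor
    (S Splus r : ℝ)
    (hS : S = ∑ i, ((ρ i / 2) * ‖wstar - u i‖ ^ 2 +
      (1 / (2 * ρ i)) * ‖lamstar i - lam i‖ ^ 2))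
    (hSplus : Splus = ∑ i, ((ρ i / 2) * ‖wstar - uplus i‖ ^ 2 +
      (1 / (2 * ρ i)) * ‖lamstar i - lamplus i‖ ^ 2))
    (hr : r = ⨅ i : Fin n, σ * ρ i / (ρ i ^ 2 + 2 * L ^ 2)) :
    (1 + r) * Splus ≤
      S + (((n : ℝ) + 1) / (2 * σ) + ∑ i, σ / (ρ i ^ 2 + 2 * L ^ 2)) * q ^ (2 * t) := by
  classical
  obtain ⟨hplus, hsubplus, hg0⟩ := hserver
  have hεpos : 0 < ε := hεq ▸ pow_pos hq0 t
  have hεsq : ε ^ 2 = q ^ (2 * t) := by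
    rw [hεq, ← pow_mul, Nat.mul_comm]
  have hPw : ∀ i, P' i wstar = -lamstar i := fun i => eq_neg_of_add_eq_zero_left (hKKT1 i)
  have hP0w : P0' wstar = (∑ i, lamstar i) - hstar := by
    have h1 : P0' wstar + hstar = ∑ i, lamstar i := sub_eq_zero.mp hKKT2
    rw [← h1]; abel
  have hdiffl : ∀ i, lamplus i - lam i = ρ i • (uplus i - wplus) := by
    intro i; rw [hlamplus i, add_sub_cancel_left]
  -- per-index key inequality
  have key : ∀ i : Fin n,
      σ * ‖wstar - uplus i‖ ^ 2
        + ((ρ i / 2) * ‖wstar - uplus i‖ ^ 2 + (1 / (2 * ρ i)) * ‖lamstar i - lamplus i‖ ^ 2)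
        + ⟪lamplus i - lamstar i - ρ i • (uplus i - u i), wplus - wstar⟫
      ≤ ((ρ i / 2) * ‖wstar - u i‖ ^ 2 + (1 / (2 * ρ i)) * ‖lamstar i - lam i‖ ^ 2)
        + ⟪P' i (uplus i) + lamplus i, uplus i - wstar⟫ := by
    intro i
    have hρi := hρ i
    -- client strong monotonicity
    have hm := hmono i (uplus i) wstar
    have hrwg : P' i (uplus i) - P' i wstar
        = (P' i (uplus i) + lamplus i) + (lamstar i - lamplus i) := by
      rw [hPw i]; abel
    rw [hrwg, inner_add_left, norm_sub_rev] at hm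
    -- combine cross terms
    have hcomb : ⟪lamstar i - lamplus i, uplus i - wstar⟫
          + ⟪lamplus i - lamstar i - ρ i • (uplus i - u i), wplus - wstar⟫
        = ⟪lamstar i - lamplus i, uplus i - wplus⟫
          + ρ i * ⟪uplus i - u i, wstar - wplus⟫ := by
      simp only [inner_sub_left, inner_sub_right, inner_add_left, inner_add_right,
        real_inner_smul_left, real_inner_smul_right]
      ring
    have hsplit : ⟪uplus i - u i, wstar - wplus⟫
        = ⟪uplus i - u i, wstar - uplus i⟫ + ⟪uplus i - u i, uplus i - wplus⟫ := by
      rw [← inner_add_right]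
      congr 1
      abel
    have e1 : ⟪lamstar i - lamplus i, uplus i - wplus⟫
        = (ρ i)⁻¹ * ((‖lamstar i - lam i‖ ^ 2 - ‖lamplus i - lam i‖ ^ 2
            - ‖lamstar i - lamplus i‖ ^ 2) / 2) := by
      have h1 : uplus i - wplus = (ρ i)⁻¹ • (lamplus i - lam i) := by
        rw [hdiffl i, inv_smul_smul₀ (ne_of_gt hρi)]
      rw [h1, real_inner_smul_right, real_inner_comm, three_point' (lam i) (lamplus i) (lamstar i)]
    have e2 : ⟪uplus i - u i, wstar - uplus i⟫
        = (‖wstar - u i‖ ^ 2 - ‖uplus i - u i‖ ^ 2 - ‖wstar - uplus i‖ ^ 2) / 2 :=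
      three_point' (u i) (uplus i) wstar
    have e3 : ⟪uplus i - u i, uplus i - wplus⟫
        = (ρ i)⁻¹ * ⟪uplus i - u i, lamplus i - lam i⟫ := by
      have h1 : uplus i - wplus = (ρ i)⁻¹ • (lamplus i - lam i) := by
        rw [hdiffl i, inv_smul_smul₀ (ne_of_gt hρi)]
      rw [h1, real_inner_smul_right]
    have e4 : ⟪uplus i - u i, lamplus i - lam i⟫
        ≤ 1 / (2 * ρ i) * ‖lamplus i - lam i‖ ^ 2 + ρ i / 2 * ‖uplus i - u i‖ ^ 2 := by
      rw [real_inner_comm]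
      exact young' (ρ i) hρi _ _
    -- put things together
    have hrinv : (0:ℝ) < (ρ i)⁻¹ := by positivity
    have e5 : (ρ i)⁻¹ * ⟪uplus i - u i, lamplus i - lam i⟫
        ≤ (ρ i)⁻¹ * (1 / (2 * ρ i) * ‖lamplus i - lam i‖ ^ 2 + ρ i / 2 * ‖uplus i - u i‖ ^ 2) :=
      mul_le_mul_of_nonneg_left e4 hrinv.le
    have hA : ⟪lamstar i - lamplus i, uplus i - wstar⟫
          + ⟪lamplus i - lamstar i - ρ i • (uplus i - u i), wplus - wstar⟫
        ≤ ((ρ i / 2) * ‖wstar - u i‖ ^ 2 + (1 / (2 * ρ i)) * ‖lamstar i - lam i‖ ^ 2)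
          - ((ρ i / 2) * ‖wstar - uplus i‖ ^ 2 + (1 / (2 * ρ i)) * ‖lamstar i - lamplus i‖ ^ 2) := by
      rw [hcomb, hsplit, mul_add, e1, e2, e3]
      have hfe : (ρ i)⁻¹ * (1 / (2 * ρ i) * ‖lamplus i - lam i‖ ^ 2 + ρ i / 2 * ‖uplus i - u i‖ ^ 2)
          = 1 / (2 * ρ i) * ((ρ i)⁻¹ * ‖lamplus i - lam i‖ ^ 2) + 1 / 2 * ‖uplus i - u i‖ ^ 2 := by
        field_simp
      have hfe2 : (ρ i)⁻¹ * ((‖lamstar i - lam i‖ ^ 2 - ‖lamplus i - lam i‖ ^ 2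
            - ‖lamstar i - lamplus i‖ ^ 2) / 2)
          = 1 / (2 * ρ i) * ‖lamstar i - lam i‖ ^ 2 - 1 / (2 * ρ i) * ‖lamplus i - lam i‖ ^ 2
            - 1 / (2 * ρ i) * ‖lamstar i - lamplus i‖ ^ 2 := by
        rw [one_div, mul_inv]
        ring
      have hfe3 : ρ i * (ρ i)⁻¹ * ⟪uplus i - u i, lamplus i - lam i⟫
          = ⟪uplus i - u i, lamplus i - lam i⟫ := by
        rw [mul_inv_cancel₀ (ne_of_gt hρi), one_mul]
      have e4' : ρ i * ((ρ i)⁻¹ * ⟪uplus i - u i, lamplus i - lam i⟫)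
          ≤ 1 / (2 * ρ i) * ‖lamplus i - lam i‖ ^ 2 + ρ i / 2 * ‖uplus i - u i‖ ^ 2 := by
        rw [← mul_assoc, hfe3]
        exact e4
      rw [hfe2]
      linarith [e4']
    linarith [hm, hA]
  -- server inequality
  have hm0 := hmono0 wplus wstar
  have hrw0 : P0' wplus - P0' wstar
      = (P0' wplus + hplus + ∑ i, (ρ i • (uplus i - u i) - lamplus i))
        - (hplus - hstar)
        + ∑ i, (lamplus i - lamstar i - ρ i • (uplus i - u i)) := by
    rw [hP0w]
    rw [Finset.sum_sub_distrib, Finset.sum_sub_distrib, Finset.sum_sub_distrib]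
    abel
  rw [hrw0, inner_add_left, inner_sub_left, sum_inner] at hm0
  -- monotonicity of the subgradient of h
  have hmonosub : 0 ≤ ⟪hplus - hstar, wplus - wstar⟫ := by
    have h1 := hsubplus wstar
    have h2 := hsubstar wplus
    have e : ⟪hplus, wstar - wplus⟫ = -⟪hplus, wplus - wstar⟫ := by
      rw [← inner_neg_right]
      congr 1
      abel
    rw [e] at h1
    rw [inner_sub_left]
    linarith
  -- Young on the residuals
  have y0 : ⟪P0' wplus + hplus + ∑ i, (ρ i • (uplus i - u i) - lamplus i), wplus - wstar⟫
      ≤ 1 / (2 * σ) * ε ^ 2 + σ / 2 * ‖wplus - wstar‖ ^ 2 := by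
    have hy := young' σ hσ (P0' wplus + hplus + ∑ i, (ρ i • (uplus i - u i) - lamplus i))
      (wplus - wstar)
    have hb : ‖P0' wplus + hplus + ∑ i, (ρ i • (uplus i - u i) - lamplus i)‖ ^ 2 ≤ ε ^ 2 := by
      nlinarith [norm_nonneg (P0' wplus + hplus + ∑ i, (ρ i • (uplus i - u i) - lamplus i)), hg0]
    have : 1 / (2 * σ) * ‖P0' wplus + hplus + ∑ i, (ρ i • (uplus i - u i) - lamplus i)‖ ^ 2
        ≤ 1 / (2 * σ) * ε ^ 2 := by
      apply mul_le_mul_of_nonneg_left hb (by positivity)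
    linarith
  have yi : ∀ i : Fin n, ⟪P' i (uplus i) + lamplus i, uplus i - wstar⟫
      ≤ 1 / (2 * σ) * ε ^ 2 + σ / 2 * ‖wstar - uplus i‖ ^ 2 := by
    intro i
    have hy := young' σ hσ (P' i (uplus i) + lamplus i) (uplus i - wstar)
    rw [norm_sub_rev (uplus i) wstar] at hy
    have hb : ‖P' i (uplus i) + lamplus i‖ ^ 2 ≤ ε ^ 2 := by
      nlinarith [norm_nonneg (P' i (uplus i) + lamplus i), hclient i]
    have : 1 / (2 * σ) * ‖P' i (uplus i) + lamplus i‖ ^ 2 ≤ 1 / (2 * σ) * ε ^ 2 :=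
      mul_le_mul_of_nonneg_left hb (by positivity)
    linarith
  -- summed key inequality
  have sumkey : σ * (∑ i, ‖wstar - uplus i‖ ^ 2) + Splus
        + ∑ i, ⟪lamplus i - lamstar i - ρ i • (uplus i - u i), wplus - wstar⟫
      ≤ S + ∑ i, ⟪P' i (uplus i) + lamplus i, uplus i - wstar⟫ := by
    have hsum := Finset.sum_le_sum (fun i (_ : i ∈ Finset.univ) => key i)
    rw [hS, hSplus]
    simp only [Finset.sum_add_distrib, ← Finset.mul_sum] at hsum ⊢
    linarith
  have ysum : ∑ i, ⟪P' i (uplus i) + lamplus i, uplus i - wstar⟫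
      ≤ (n : ℝ) * (1 / (2 * σ) * ε ^ 2) + σ / 2 * ∑ i, ‖wstar - uplus i‖ ^ 2 := by
    have hsum := Finset.sum_le_sum (fun i (_ : i ∈ Finset.univ) => yi i)
    rw [Finset.sum_add_distrib, Finset.sum_const, Finset.card_univ, Fintype.card_fin,
      nsmul_eq_mul, ← Finset.mul_sum] at hsum
    exact hsum
  -- central inequality
  have central : Splus + σ / 2 * ∑ i, ‖wstar - uplus i‖ ^ 2
      ≤ S + ((n : ℝ) + 1) * (1 / (2 * σ) * ε ^ 2) := by
    have hw2 : 0 ≤ σ / 2 * ‖wplus - wstar‖ ^ 2 := by positivity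
    linarith [sumkey, ysum, hm0, hmonosub, y0, hw2]
  -- contraction estimates
  haveI : Nonempty (Fin n) := Fin.pos_iff_nonempty.mp hn
  have hrle : ∀ i : Fin n, r ≤ σ * ρ i / (ρ i ^ 2 + 2 * L ^ 2) := by
    intro i
    rw [hr]
    exact ciInf_le (Set.Finite.bddBelow (Set.finite_range _)) i
  have hrnn : 0 ≤ r := by
    rw [hr]
    exact Real.iInf_nonneg fun i => by have := hρ i; positivity
  have hlam : ∀ i : Fin n, ‖lamstar i - lamplus i‖ ≤ L * ‖wstar - uplus i‖ + ε := by
    intro i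
    have hvec : lamstar i - lamplus i
        = (P' i (uplus i) - P' i wstar) - (P' i (uplus i) + lamplus i) := by
      rw [hPw i]; abel
    rw [hvec]
    refine (norm_sub_le _ _).trans ?_
    have h1 : ‖P' i (uplus i) - P' i wstar‖ = ‖P' i wstar - P' i (uplus i)‖ := norm_sub_rev _ _
    have h2 := hLip i
    have h3 := hclient i
    linarith
  have contr : ∀ i : Fin n,
      r * ((ρ i / 2) * ‖wstar - uplus i‖ ^ 2 + (1 / (2 * ρ i)) * ‖lamstar i - lamplus i‖ ^ 2)
      ≤ σ / 2 * ‖wstar - uplus i‖ ^ 2 + σ / (ρ i ^ 2 + 2 * L ^ 2) * ε ^ 2 := by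
    intro i
    have hρi := hρ i
    have hD : (0:ℝ) < ρ i ^ 2 + 2 * L ^ 2 := by positivity
    have hB : ‖lamstar i - lamplus i‖ ^ 2 ≤ 2 * L ^ 2 * ‖wstar - uplus i‖ ^ 2 + 2 * ε ^ 2 := by
      nlinarith [hlam i, norm_nonneg (lamstar i - lamplus i), norm_nonneg (wstar - uplus i),
        hεpos.le, sq_nonneg (L * ‖wstar - uplus i‖ - ε)]
    have hsnn : 0 ≤ (ρ i / 2) * ‖wstar - uplus i‖ ^ 2
        + (1 / (2 * ρ i)) * ‖lamstar i - lamplus i‖ ^ 2 := by positivity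
    calc r * ((ρ i / 2) * ‖wstar - uplus i‖ ^ 2 + (1 / (2 * ρ i)) * ‖lamstar i - lamplus i‖ ^ 2)
        ≤ (σ * ρ i / (ρ i ^ 2 + 2 * L ^ 2)) * ((ρ i / 2) * ‖wstar - uplus i‖ ^ 2
            + (1 / (2 * ρ i)) * ‖lamstar i - lamplus i‖ ^ 2) :=
          mul_le_mul_of_nonneg_right (hrle i) hsnn
      _ ≤ (σ * ρ i / (ρ i ^ 2 + 2 * L ^ 2)) * ((ρ i / 2) * ‖wstar - uplus i‖ ^ 2
            + (1 / (2 * ρ i)) * (2 * L ^ 2 * ‖wstar - uplus i‖ ^ 2 + 2 * ε ^ 2)) := by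
          apply mul_le_mul_of_nonneg_left _ (by positivity)
          have hmul : (1 / (2 * ρ i)) * ‖lamstar i - lamplus i‖ ^ 2
              ≤ (1 / (2 * ρ i)) * (2 * L ^ 2 * ‖wstar - uplus i‖ ^ 2 + 2 * ε ^ 2) :=
            mul_le_mul_of_nonneg_left hB (by positivity)
          linarith
      _ = σ / 2 * ‖wstar - uplus i‖ ^ 2 + σ / (ρ i ^ 2 + 2 * L ^ 2) * ε ^ 2 := by
          field_simp
          ring
  have contrsum : r * Splus ≤ σ / 2 * (∑ i, ‖wstar - uplus i‖ ^ 2)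
      + (∑ i, σ / (ρ i ^ 2 + 2 * L ^ 2)) * ε ^ 2 := by
    rw [hSplus, Finset.mul_sum, Finset.sum_mul]
    refine le_trans (Finset.sum_le_sum fun i _ => contr i) ?_
    rw [Finset.sum_add_distrib, ← Finset.mul_sum]
  -- conclusion
  rw [← hεsq]
  have h2 : (((n:ℝ) + 1) / (2 * σ) + ∑ i, σ / (ρ i ^ 2 + 2 * L ^ 2)) * ε ^ 2
      = ((n:ℝ) + 1) * (1 / (2 * σ) * ε ^ 2)
        + (∑ i, σ / (ρ i ^ 2 + 2 * L ^ 2)) * ε ^ 2 := by ring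
  rw [h2]
  linarith [central, contrsum]
end

section
/- Let σ > 0, q ∈ (0,1), L > 0, P_0, …, P_n : ℝ^d → ℝ differentiable with ⟨∇P_i(x) − ∇P_i(y), x − y⟩ ≥ σ‖x − y‖², h : ℝ^d → ℝ convex, ρ_i > 0, w̃⁰ ∈ ℝ^d, and let (w̃*, λ_i*, h*) be a KKT point (h* a subgradient of h at w̃*, ∇P_i(w̃*) + λ_i* = 0 for 1 ≤ i ≤ n, ∇P_0(w̃*) + h* − Σ_i λ_i* = 0). Suppose sequences (w^{t+1}), (u_i^t), (λ_i^t) satisfy the ADMM iterate conditions with initial point w̃⁰ and tolerances q^t, and additionally ‖∇P_i(w̃*) − ∇P_i(u_i^{t+1})‖ ≤ L‖w̃* − u_i^{t+1}‖ for all i and t. Define S_t = Σ_{i=1}^n ( (ρ_i/2)‖w̃* − u_i^t‖² + (1/(2ρ_i))‖λ_i* − λ_i^t‖² ), r = min_{1≤i≤n} σρ_i/(ρ_i² + 2L²), and q_r = max{q, 1/(1 + r)}. Then for all t ≥ 0, S_t ≤ q_r^t · ( S_0 + (1/(1 − q))·( (n+1)/(2σ) + Σ_{i=1}^n σ/(ρ_i²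 + 2L²) ) ). -/
open scoped RealInnerProductSpace

lemma aux_young {E : Type*} [NormedAddCommGroup E] [InnerProductSpace ℝ E]
    (σ : ℝ) (hσ : 0 < σ) (x y : E) :
    ⟪x, y⟫ ≤ 1/(2*σ) * ‖x‖^2 + σ/2 * ‖y‖^2 := by
  have h1 := real_inner_le_norm x y
  have h3 : 1/(2*σ) * ‖x‖^2 + σ/2 * ‖y‖^2 - ‖x‖*‖y‖ = (1/(2*σ)) * (‖x‖ - σ*‖y‖)^2 := by
    field_simp; ring
  nlinarith [sq_nonneg (‖x‖ - σ*‖y‖), one_div_pos.mpr (by positivity : (0:ℝ) < 2*σ)]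

lemma aux_core {E : Type*} [NormedAddCommGroup E] [InnerProductSpace ℝ E]
    (ρ : ℝ) (hρ : 0 < ρ) (p x b δ : E) :
    (1/(2*ρ))*‖p - x‖^2 + (ρ/2)*‖b - δ‖^2 - (1/(2*ρ))*‖p‖^2 - (ρ/2)*‖b‖^2
      - (⟪p, -(ρ⁻¹) • x⟫ - ρ * ⟪δ, b - ρ⁻¹ • x⟫)
    = (1/(2*ρ))*‖x - ρ•δ‖^2 := by
  simp only [norm_sub_sq_real, inner_sub_right, real_inner_smul_left, real_inner_smul_right]
  rw [real_inner_comm δ x, real_inner_comm δ b]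
  simp only [norm_smul, Real.norm_eq_abs, abs_of_pos hρ, mul_pow]
  field_simp
  ring

lemma aux_ident {E : Type*} [NormedAddCommGroup E] [InnerProductSpace ℝ E]
    (ρ : ℝ) (hρ : 0 < ρ) (lt l1 ls ut u1 ws w1 : E)
    (hl : l1 = lt + ρ • (u1 - w1)) :
    ⟪l1 - ls, w1 - u1⟫ - ρ * ⟪u1 - ut, w1 - ws⟫ ≤
      (1/(2*ρ))*‖lt - ls‖^2 + (ρ/2)*‖ut - ws‖^2
      - (1/(2*ρ))*‖l1 - ls‖^2 - (ρ/2)*‖u1 - ws‖^2 := by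
  have hx : ρ⁻¹ • (l1 - lt) = u1 - w1 := by
    rw [hl, add_sub_cancel_left, smul_smul, inv_mul_cancel₀ hρ.ne', one_smul]
  have h1 : w1 - u1 = -(ρ⁻¹) • (l1 - lt) := by rw [neg_smul, hx]; abel
  have h2 : w1 - ws = (u1 - ws) - ρ⁻¹ • (l1 - lt) := by rw [hx]; abel
  have h3 : lt - ls = (l1 - ls) - (l1 - lt) := by abel
  have h4 : ut - ws = (u1 - ws) - (u1 - ut) := by abel
  have core := aux_core ρ hρ (l1 - ls) (l1 - lt) (u1 - ws) (u1 - ut)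
  rw [h1, h2, h3, h4]
  have hnn : 0 ≤ (1/(2*ρ))*‖(l1 - lt) - ρ•(u1 - ut)‖^2 := by positivity
  linarith [core]

lemma aux_arith (σ L ρ r A B q2 : ℝ) (hL : 0 < L) (hρ : 0 < ρ)
    (hr0 : 0 < r) (hrle : r ≤ σ*ρ/(ρ^2+2*L^2)) (hA : 0 ≤ A) (hq2 : 0 ≤ q2)
    (hB : B ≤ 2*L^2*A + 2*q2) :
    r * (ρ/2*A + 1/(2*ρ)*B) ≤ σ/2*A + σ/(ρ^2+2*L^2)*q2 := by
  have hden : (0:ℝ) < ρ^2+2*L^2 := by positivity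
  have h1 : r * (ρ/2*A + 1/(2*ρ)*B) ≤ r * (ρ/2*A + 1/(2*ρ)*(2*L^2*A+2*q2)) := by
    apply mul_le_mul_of_nonneg_left _ hr0.le
    have hpos : (0:ℝ) < 1/(2*ρ) := by positivity
    nlinarith
  have hfac : 0 ≤ ρ/2*A + 1/(2*ρ)*(2*L^2*A+2*q2) := by positivity
  have h2 : r * (ρ/2*A + 1/(2*ρ)*(2*L^2*A+2*q2))
      ≤ (σ*ρ/(ρ^2+2*L^2)) * (ρ/2*A + 1/(2*ρ)*(2*L^2*A+2*q2)) :=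
    mul_le_mul_of_nonneg_right hrle hfac
  have h3 : (σ*ρ/(ρ^2+2*L^2)) * (ρ/2*A + 1/(2*ρ)*(2*L^2*A+2*q2))
      = σ/2*A + σ/(ρ^2+2*L^2)*q2 := by
    field_simp; ring
  linarith

lemma aux_T {E : Type*} [NormedAddCommGroup E] [InnerProductSpace ℝ E]
    (ρ : ℝ) (l ls uu du w1 ws : E) :
    ⟪ls - l, uu - ws⟫ + ⟪l - ls - ρ • du, w1 - ws⟫
      = ⟪l - ls, w1 - uu⟫ - ρ * ⟪du, w1 - ws⟫ := by
  simp only [inner_sub_left, inner_sub_right, real_inner_smul_left]; ring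

set_option maxHeartbeats 1000000 in
/-- Lemma 4.3 (geometric decay of the ADMM potential): under the ADMM iterate
conditions with initial point `w̃⁰` and tolerances `q^t`, plus the Lipschitz bound
`‖∇P_i(w̃*) − ∇P_i(u_i^{t+1})‖ ≤ L‖w̃* − u_i^{t+1}‖`, with
`S_t = Σ_i ((ρ_i/2)‖w̃* − u_i^t‖² + (1/2ρ_i)‖λ_i* − λ_i^t‖²)`,
`r = min_i σρ_i/(ρ_i² + 2L²)` and `q_r = max{q, 1/(1+r)}`, we have
`S_t ≤ q_r^t (S_0 + (1/(1−q))((n+1)/(2σ) + Σ_i σ/(ρ_i² + 2L²)))` for all `t`. -/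
theorem stmt_13 {d : ℕ} (n : ℕ) (hn : 1 ≤ n) (σ q L : ℝ) (hσ : 0 < σ)
    (hq0 : 0 < q) (hq1 : q < 1) (hL : 0 < L)
    (P0 : EuclideanSpace ℝ (Fin d) → ℝ) (P0' : EuclideanSpace ℝ (Fin d) → EuclideanSpace ℝ (Fin d))
    (hP0 : ∀ x, HasGradientAt P0 (P0' x) x)
    (P : Fin n → EuclideanSpace ℝ (Fin d) → ℝ)
    (P' : Fin n → EuclideanSpace ℝ (Fin d) → EuclideanSpace ℝ (Fin d))
    (hP : ∀ i x, HasGradientAt (P i) (P' i x) x)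
    (hmono0 : ∀ x y, σ * ‖x - y‖ ^ 2 ≤ ⟪P0' x - P0' y, x - y⟫)
    (hmono : ∀ i, ∀ x y, σ * ‖x - y‖ ^ 2 ≤ ⟪P' i x - P' i y, x - y⟫)
    (h : EuclideanSpace ℝ (Fin d) → ℝ) (hh : ConvexOn ℝ Set.univ h)
    (ρ : Fin n → ℝ) (hρ : ∀ i, 0 < ρ i)
    -- KKT point
    (wstar : EuclideanSpace ℝ (Fin d)) (lamstar : Fin n → EuclideanSpace ℝ (Fin d))
    (hstar : EuclideanSpace ℝ (Fin d))
    (hsubstar : ∀ y, h wstar + ⟪hstar, y - wstar⟫ ≤ h y)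
    (hKKT1 : ∀ i, P' i wstar + lamstar i = 0)
    (hKKT2 : P0' wstar + hstar - ∑ i, lamstar i = 0)
    -- ADMM iterate conditions with initial point w̃⁰ and tolerances q^t
    (w0 : EuclideanSpace ℝ (Fin d))
    (w : ℕ → EuclideanSpace ℝ (Fin d)) (u lam : Fin n → ℕ → EuclideanSpace ℝ (Fin d))
    (hinit_u : ∀ i, u i 0 = w0) (hinit_lam : ∀ i, lam i 0 = -P' i w0)
    (hlam : ∀ i, ∀ t : ℕ, lam i (t + 1) = lam i t + ρ i • (u i (t + 1) - w (t + 1)))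
    (hserver : ∀ t : ℕ, ∃ ht1 : EuclideanSpace ℝ (Fin d),
      (∀ y, h (w (t + 1)) + ⟪ht1, y - w (t + 1)⟫ ≤ h y) ∧
      ‖P0' (w (t + 1)) + ht1 +
        ∑ i, (ρ i • (u i (t + 1) - u i t) - lam i (t + 1))‖ ≤ q ^ t)
    (hclient : ∀ i, ∀ t : ℕ, ‖P' i (u i (t + 1)) + lam i (t + 1)‖ ≤ q ^ t)
    -- Lipschitz bound at the client iterates
    (hLip : ∀ i, ∀ t : ℕ, ‖P' i wstar - P' i (u i (t + 1))‖ ≤ L * ‖wstar - u i (t + 1)‖)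
    -- potential, contraction factor
    (S : ℕ → ℝ)
    (hS : ∀ t, S t = ∑ i, ((ρ i / 2) * ‖wstar - u i t‖ ^ 2 +
      (1 / (2 * ρ i)) * ‖lamstar i - lam i t‖ ^ 2))
    (r : ℝ) (hr : r = ⨅ i : Fin n, σ * ρ i / (ρ i ^ 2 + 2 * L ^ 2)) :
    ∀ t : ℕ, S t ≤ (max q (1 / (1 + r))) ^ t *
      (S 0 + (1 / (1 - q)) * (((n : ℝ) + 1) / (2 * σ) +
        ∑ i, σ / (ρ i ^ 2 + 2 * L ^ 2))) := by
  have hden : ∀ i : Fin n, (0:ℝ) < ρ i ^ 2 + 2 * L ^ 2 := fun i => by positivity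
  have hne : Nonempty (Fin n) := ⟨⟨0, hn⟩⟩
  have hr_le : ∀ i, r ≤ σ * ρ i / (ρ i ^ 2 + 2 * L ^ 2) := by
    intro i; rw [hr]
    exact ciInf_le (Set.Finite.bddBelow (Set.finite_range _)) i
  have hrpos : 0 < r := by
    rw [hr]
    obtain ⟨i0, hi0⟩ := Finite.exists_min (fun i : Fin n => σ * ρ i / (ρ i ^ 2 + 2 * L ^ 2))
    have h1 : σ * ρ i0 / (ρ i0 ^ 2 + 2 * L ^ 2)
        ≤ ⨅ i : Fin n, σ * ρ i / (ρ i ^ 2 + 2 * L ^ 2) := le_ciInf hi0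
    have h2 : 0 < σ * ρ i0 / (ρ i0 ^ 2 + 2 * L ^ 2) := div_pos (mul_pos hσ (hρ i0)) (hden i0)
    linarith
  set C : ℝ := ((n : ℝ) + 1) / (2 * σ) + ∑ i, σ / (ρ i ^ 2 + 2 * L ^ 2) with hCdef
  clear_value C
  have hC : 0 ≤ C := by
    rw [hCdef]
    apply add_nonneg
    · positivity
    · exact Finset.sum_nonneg fun i _ => le_of_lt (div_pos hσ (hden i))
  have hSnn : ∀ t, 0 ≤ S t := by
    intro t; rw [hS]
    refine Finset.sum_nonneg fun i _ => ?_
    have := hρ i; positivity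
  -- key one-step contraction
  have key : ∀ t : ℕ, (1 + r) * S (t+1) ≤ S t + (q^t * q^t) * C := by
    intro t
    obtain ⟨h1, hsub1, he0⟩ := hserver t
    have hq2 : (0:ℝ) ≤ q^t * q^t := by positivity
    -- monotonicity of subgradients of h
    have hhmono : 0 ≤ ⟪h1 - hstar, w (t+1) - wstar⟫ := by
      have a := hsub1 wstar
      have b := hsubstar (w (t+1))
      have e1 : (wstar - w (t+1) : EuclideanSpace ℝ (Fin d)) = -(w (t+1) - wstar) := by abel
      rw [e1, inner_neg_right] at a
      rw [inner_sub_left]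
      linarith
    -- Young for the server error
    have hy0 : ⟪P0' (w (t+1)) + h1 + ∑ i, (ρ i • (u i (t+1) - u i t) - lam i (t+1)),
        w (t+1) - wstar⟫ ≤ 1/(2*σ) * (q^t*q^t) + σ/2 * ‖w (t+1) - wstar‖^2 := by
      have hy := aux_young σ hσ
        (P0' (w (t+1)) + h1 + ∑ i, (ρ i • (u i (t+1) - u i t) - lam i (t+1)))
        (w (t+1) - wstar)
      have hnq : ‖P0' (w (t+1)) + h1 + ∑ i, (ρ i • (u i (t+1) - u i t) - lam i (t+1))‖^2
          ≤ q^t * q^t := by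
        calc ‖P0' (w (t+1)) + h1 + ∑ i, (ρ i • (u i (t+1) - u i t) - lam i (t+1))‖^2
            ≤ (q^t)^2 := pow_le_pow_left₀ (norm_nonneg _) he0 2
          _ = q^t * q^t := by ring
      have h2σ : (0:ℝ) ≤ 1/(2*σ) := by positivity
      have := mul_le_mul_of_nonneg_left hnq h2σ
      linarith
    -- server inequality
    have hB : σ * ‖w (t+1) - wstar‖^2 ≤
        ⟪P0' (w (t+1)) + h1 + ∑ i, (ρ i • (u i (t+1) - u i t) - lam i (t+1)), w (t+1) - wstar⟫
        + ∑ i, ⟪lam i (t+1) - lamstar i - ρ i • (u i (t+1) - u i t), w (t+1) - wstar⟫ := by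
      have hm := hmono0 (w (t+1)) wstar
      have hP0star : P0' wstar = ∑ i, lamstar i - hstar :=
        eq_sub_of_add_eq (sub_eq_zero.mp hKKT2)
      have hdecomp : P0' (w (t+1)) - P0' wstar
          = (P0' (w (t+1)) + h1 + ∑ i, (ρ i • (u i (t+1) - u i t) - lam i (t+1)))
            - (h1 - hstar)
            + ∑ i, (lam i (t+1) - lamstar i - ρ i • (u i (t+1) - u i t)) := by
        rw [hP0star]
        simp only [Finset.sum_sub_distrib]
        abel
      rw [hdecomp, inner_add_left, inner_sub_left, sum_inner] at hm
      linarith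
    -- per-client inequality
    have hstep : ∀ i : Fin n,
        σ/2 * ‖wstar - u i (t+1)‖^2
        + ⟪lam i (t+1) - lamstar i - ρ i • (u i (t+1) - u i t), w (t+1) - wstar⟫
        ≤ 1/(2*σ) * (q^t*q^t)
          + ((ρ i / 2) * ‖wstar - u i t‖^2 + (1/(2*ρ i)) * ‖lamstar i - lam i t‖^2)
          - ((ρ i / 2) * ‖wstar - u i (t+1)‖^2 + (1/(2*ρ i)) * ‖lamstar i - lam i (t+1)‖^2) := by
      intro i
      have hm := hmono i (u i (t+1)) wstar
      rw [norm_sub_rev (u i (t+1)) wstar] at hm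
      have hPstar : P' i wstar = -lamstar i := eq_neg_of_add_eq_zero_left (hKKT1 i)
      have hd : P' i (u i (t+1)) - P' i wstar
          = (P' i (u i (t+1)) + lam i (t+1)) + (lamstar i - lam i (t+1)) := by
        rw [hPstar]; abel
      rw [hd, inner_add_left] at hm
      have hy : ⟪P' i (u i (t+1)) + lam i (t+1), u i (t+1) - wstar⟫
          ≤ 1/(2*σ) * (q^t*q^t) + σ/2 * ‖wstar - u i (t+1)‖^2 := by
        have hy' := aux_young σ hσ (P' i (u i (t+1)) + lam i (t+1)) (u i (t+1) - wstar)
        rw [norm_sub_rev (u i (t+1)) wstar] at hy'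
        have hnq : ‖P' i (u i (t+1)) + lam i (t+1)‖^2 ≤ q^t * q^t := by
          calc ‖P' i (u i (t+1)) + lam i (t+1)‖^2
              ≤ (q^t)^2 := pow_le_pow_left₀ (norm_nonneg _) (hclient i t) 2
            _ = q^t * q^t := by ring
        have h2σ : (0:ℝ) ≤ 1/(2*σ) := by positivity
        have := mul_le_mul_of_nonneg_left hnq h2σ
        linarith
      have hT : ⟪lamstar i - lam i (t+1), u i (t+1) - wstar⟫
          + ⟪lam i (t+1) - lamstar i - ρ i • (u i (t+1) - u i t), w (t+1) - wstar⟫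
          = ⟪lam i (t+1) - lamstar i, w (t+1) - u i (t+1)⟫
            - ρ i * ⟪u i (t+1) - u i t, w (t+1) - wstar⟫ :=
        aux_T (ρ i) (lam i (t+1)) (lamstar i) (u i (t+1)) (u i (t+1) - u i t) (w (t+1)) wstar
      have hident := aux_ident (ρ i) (hρ i) (lam i t) (lam i (t+1)) (lamstar i)
        (u i t) (u i (t+1)) wstar (w (t+1)) (hlam i t)
      rw [norm_sub_rev (lam i t) (lamstar i), norm_sub_rev (u i t) wstar,
        norm_sub_rev (lam i (t+1)) (lamstar i), norm_sub_rev (u i (t+1)) wstar] at hident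
      linarith
    -- sum the per-client inequalities
    have hsum := Finset.sum_le_sum (fun i (_ : i ∈ Finset.univ) => hstep i)
    simp only [Finset.sum_add_distrib, Finset.sum_sub_distrib, Finset.sum_const,
      Finset.card_univ, Fintype.card_fin, nsmul_eq_mul] at hsum
    have hSt : S t = ∑ i, (ρ i / 2) * ‖wstar - u i t‖^2
        + ∑ i, (1/(2*ρ i)) * ‖lamstar i - lam i t‖^2 := by
      rw [hS t, Finset.sum_add_distrib]
    have hSt1 : S (t+1) = ∑ i, (ρ i / 2) * ‖wstar - u i (t+1)‖^2
        + ∑ i, (1/(2*ρ i)) * ‖lamstar i - lam i (t+1)‖^2 := by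
      rw [hS (t+1), Finset.sum_add_distrib]
    -- combined "big" inequality
    have hwnn : (0:ℝ) ≤ σ/2 * ‖w (t+1) - wstar‖^2 := by positivity
    have big : S (t+1) + ∑ i, σ/2 * ‖wstar - u i (t+1)‖^2
        ≤ S t + ((n:ℝ)+1)/(2*σ) * (q^t*q^t) := by
      have hconst : ((n:ℝ)+1)/(2*σ) * (q^t*q^t)
          = (n:ℝ) * (1/(2*σ) * (q^t*q^t)) + 1/(2*σ) * (q^t*q^t) := by
        field_simp
      linarith
    -- the r·S bound
    have rS : r * S (t+1) ≤ ∑ i, σ/2 * ‖wstar - u i (t+1)‖^2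
        + ∑ i, σ/(ρ i^2+2*L^2) * (q^t*q^t) := by
      rw [hS (t+1), Finset.mul_sum, ← Finset.sum_add_distrib]
      refine Finset.sum_le_sum fun i _ => ?_
      have hrep : lamstar i - lam i (t+1)
          = -(P' i wstar - P' i (u i (t+1))) - (P' i (u i (t+1)) + lam i (t+1)) := by
        have hPstar : lamstar i = -(P' i wstar) := eq_neg_of_add_eq_zero_right (hKKT1 i)
        rw [hPstar]; abel
      have hnb : ‖lamstar i - lam i (t+1)‖ ≤ L * ‖wstar - u i (t+1)‖ + q^t := by
        rw [hrep]
        refine le_trans (norm_sub_le _ _) ?_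
        rw [norm_neg]
        exact add_le_add (hLip i t) (hclient i t)
      have hBB : ‖lamstar i - lam i (t+1)‖^2
          ≤ 2*L^2*‖wstar - u i (t+1)‖^2 + 2*(q^t*q^t) := by
        have hsq := pow_le_pow_left₀ (norm_nonneg _) hnb 2
        nlinarith [sq_nonneg (L * ‖wstar - u i (t+1)‖ - q^t)]
      have := aux_arith σ L (ρ i) r (‖wstar - u i (t+1)‖^2) (‖lamstar i - lam i (t+1)‖^2)
        (q^t*q^t) hL (hρ i) hrpos (hr_le i) (by positivity) hq2 hBB
      linarith
    have hCq : (q^t*q^t) * C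
        = ((n:ℝ)+1)/(2*σ) * (q^t*q^t) + ∑ i, σ/(ρ i^2+2*L^2) * (q^t*q^t) := by
      rw [hCdef, ← Finset.sum_mul]
      ring
    have hexp : (1+r) * S (t+1) = S (t+1) + r * S (t+1) := by ring
    linarith [big, rS]
  -- iterate the contraction
  set qr := max q (1 / (1 + r)) with hqrdef
  clear_value qr
  have h1r : (0:ℝ) < 1 + r := by linarith
  have hqr_q : q ≤ qr := by rw [hqrdef]; exact le_max_left _ _
  have hqr_inv : 1/(1+r) ≤ qr := by rw [hqrdef]; exact le_max_right _ _
  have hqr0 : 0 < qr := lt_of_lt_of_le hq0 hqr_q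
  have step : ∀ t, S (t+1) ≤ qr * (S t + (q^t*q^t)*C) := by
    intro t
    have hk := key t
    have hX : 0 ≤ S t + (q^t*q^t)*C := add_nonneg (hSnn t) (mul_nonneg (by positivity) hC)
    have hinv : (0:ℝ) < 1/(1+r) := by positivity
    have h2 := mul_le_mul_of_nonneg_left hk hinv.le
    have hcancel : (1/(1+r))*((1+r)*S (t+1)) = S (t+1) := by field_simp
    have h3 : (1/(1+r)) * (S t + (q^t*q^t)*C) ≤ qr * (S t + (q^t*q^t)*C) :=
      mul_le_mul_of_nonneg_right hqr_inv hX
    linarith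
  have main : ∀ t, S t ≤ qr^t * (S 0 + C * ∑ k ∈ Finset.range t, q^k) := by
    intro t
    induction t with
    | zero => simp
    | succ t ih =>
      have hqt : q^t ≤ qr^t := pow_le_pow_left₀ hq0.le hqr_q t
      have h4 := step t
      have h5 : S t + (q^t*q^t)*C
          ≤ qr^t * (S 0 + C * ∑ k ∈ Finset.range t, q^k) + (qr^t*q^t)*C := by
        have hqq : (q^t*q^t)*C ≤ (qr^t*q^t)*C := by
          apply mul_le_mul_of_nonneg_right _ hC
          exact mul_le_mul_of_nonneg_right hqt (by positivity)
        linarith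
      have h6 : qr * (qr^t * (S 0 + C * ∑ k ∈ Finset.range t, q^k) + (qr^t*q^t)*C)
          = qr^(t+1) * (S 0 + C * (∑ k ∈ Finset.range t, q^k + q^t)) := by
        rw [pow_succ]; ring
      rw [Finset.sum_range_succ]
      calc S (t+1) ≤ qr * (S t + (q^t*q^t)*C) := h4
        _ ≤ qr * (qr^t * (S 0 + C * ∑ k ∈ Finset.range t, q^k) + (qr^t*q^t)*C) :=
            mul_le_mul_of_nonneg_left h5 hqr0.le
        _ = qr^(t+1) * (S 0 + C * (∑ k ∈ Finset.range t, q^k + q^t)) := h6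
  intro t
  have hgeom : ∑ k ∈ Finset.range t, q^k ≤ 1/(1-q) := by
    rw [geom_sum_eq hq1.ne t]
    have he : (q^t - 1)/(q - 1) = (1 - q^t)/(1 - q) := by
      rw [div_eq_div_iff (by linarith) (by linarith)]; ring
    rw [he, div_le_div_iff₀ (by linarith) (by linarith)]
    nlinarith [pow_nonneg hq0.le t]
  have hmt := main t
  have hfin : S 0 + C * ∑ k ∈ Finset.range t, q^k ≤ S 0 + (1/(1-q)) * C := by
    have := mul_le_mul_of_nonneg_left hgeom hC
    linarith
  calc S t ≤ qr^t * (S 0 + C * ∑ k ∈ Finset.range t, q^k) := hmt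
    _ ≤ qr^t * (S 0 + (1/(1-q)) * C) :=
        mul_le_mul_of_nonneg_left hfin (pow_nonneg hqr0.le t)
end

section
/- Let d ≥ 1, let β > 0, n ≥ 1 a natural number, μ_0 ≥ 0 a real number, and w̄ ∈ ℝ^d. Then the map G : ℝ^d → ℝ^d defined by G(w) = 2·max(μ_0 + β·(‖w‖² − 1), 0)·w + (w − w̄)/((n+1)β) is not Lipschitz continuous on ℝ^d; that is, there is no constant K ≥ 0 with ‖G(u) − G(v)‖ ≤ K‖u − v‖ for all u, v ∈ ℝ^d. -/
/-- Remark 4.1: for `c₀(w) = ‖w‖² − 1`, the gradient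
`G(w) = 2 max(μ₀ + β(‖w‖² − 1), 0) w + (w − w̄)/((n+1)β)` of the
augmented-Lagrangian merit function is not (globally) Lipschitz on `ℝ^d`. -/
theorem stmt_16 (d : ℕ) (hd : 1 ≤ d) (β : ℝ) (hβ : 0 < β) (n : ℕ) (hn : 1 ≤ n)
    (μ0 : ℝ) (hμ0 : 0 ≤ μ0) (wbar : EuclideanSpace ℝ (Fin d))
    (G : EuclideanSpace ℝ (Fin d) → EuclideanSpace ℝ (Fin d))
    (hG : ∀ w, G w = (2 * max (μ0 + β * (‖w‖ ^ 2 - 1)) 0) • w +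
      (((n : ℝ) + 1) * β)⁻¹ • (w - wbar)) :
    ¬ ∃ K : ℝ, 0 ≤ K ∧ ∀ u v : EuclideanSpace ℝ (Fin d), ‖G u - G v‖ ≤ K * ‖u - v‖ := by
  rintro ⟨K, hK, hLip⟩
  set c : ℝ := (((n : ℝ) + 1) * β)⁻¹ with hc
  have hcpos : 0 < c := by
    apply inv_pos.mpr
    have : (0:ℝ) < (n:ℝ) + 1 := by positivity
    positivity
  set e : EuclideanSpace ℝ (Fin d) := EuclideanSpace.single ⟨0, hd⟩ 1 with he_def
  have he : ‖e‖ = 1 := by simp [he_def]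
  set s : ℝ := Real.sqrt ((K + 2*β)/(2*β)) with hs_def
  have hs : 0 ≤ s := Real.sqrt_nonneg _
  set t : ℝ := s + 1 with ht_def
  have ht1 : 1 ≤ t := by linarith
  have htpos : 0 < t := by linarith
  have ht2 : (K + 2*β)/(2*β) ≤ t^2 := by
    have hsq : s^2 = (K + 2*β)/(2*β) := Real.sq_sqrt (by positivity)
    nlinarith
  have hK2 : K ≤ 2*β*t^2 - 2*β := by
    have : K + 2*β ≤ 2*β * t^2 := by
      have := (div_le_iff₀ (by positivity : (0:ℝ) < 2*β)).mp ht2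
      linarith
    linarith
  have hnorm_te : ‖t • e‖ = t := by
    rw [norm_smul, he, Real.norm_eq_abs, abs_of_pos htpos, mul_one]
  set M : ℝ := max (μ0 + β * (‖t • e‖ ^ 2 - 1)) 0 with hM
  have hMge : μ0 + β * (t^2 - 1) ≤ M := by
    rw [hM, hnorm_te]; exact le_max_left _ _
  have hdiff : G (t • e) - G 0 = ((2*M + c) * t) • e := by
    rw [hG, hG, ← hM]
    simp only [norm_zero, zero_sub, smul_zero]
    module
  have hLip' := hLip (t • e) 0
  rw [hdiff, sub_zero, hnorm_te] at hLip'
  rw [norm_smul, he, mul_one, Real.norm_eq_abs] at hLip'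
  have habs : |(2*M + c) * t| = (2*M + c) * t := by
    apply abs_of_nonneg
    have hM0 : 0 ≤ M := le_max_right _ _
    positivity
  rw [habs] at hLip'
  have h2M : K < 2*M + c := by
    have : 2*β*t^2 - 2*β ≤ 2*M := by nlinarith
    linarith
  nlinarith
end
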